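/- arXiv:2009.10354 — 6 statements merged into one kernel-verified Lean document; each statement's English description precedes it below -/
import Mathlib

section
/- For every v ∈ V with v ≠ 0, the limit d(v) := lim_{i→∞} (log‖A_{i+1} v‖ − log‖A_i v‖) exists, and d(v) is an eigenvalue of Λ, i.e. d(v) ∈ {d_1, …, d_k}. -/
open Filter Topology

lemma exp_eigen {V : Type*} [NormedAddCommGroup V] [NormedSpace ℂ V] [CompleteSpace V]
    (Λ : V →L[ℂ] V) (c : ℂ) (x : V) (h : Λ x = c • x) :
    NormedSpace.exp Λ x = NormedSpace.exp c • x := by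
  have hpow : ∀ n : ℕ, (Λ ^ n) x = c ^ n • x := by
    intro n; induction n with
    | zero => simp
    | succ n ih => rw [pow_succ', pow_succ', ContinuousLinearMap.mul_apply, ih,
        map_smul, h, smul_smul, mul_comm]
  have hs : Summable fun n : ℕ => ((n.factorial : ℂ)⁻¹ • Λ ^ n) :=
    NormedSpace.expSeries_summable' (𝕂 := ℂ) Λ
  have key := (ContinuousLinearMap.apply ℂ V x).map_tsum hs
  simp only [ContinuousLinearMap.apply_apply] at key
  rw [NormedSpace.exp_eq_tsum ℂ]
  simp only []
  rw [key]
  simp_rw [ContinuousLinearMap.smul_apply, hpow, smul_smul]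
  rw [NormedSpace.exp_eq_tsum ℂ, ← Summable.tsum_smul_const
    (NormedSpace.expSeries_summable' (𝕂 := ℂ) c)]
  simp [smul_smul]

lemma vanish_rec (θ : ℝ) (hθ0 : 0 ≤ θ) (hθ1 : θ < 1) (u c : ℕ → ℝ) (i₁ : ℕ)
    (hu0 : ∀ i, i₁ ≤ i → 0 ≤ u i)
    (hrec : ∀ i, i₁ ≤ i → u (i + 1) ≤ θ * u i + c i)
    (hc0 : ∀ i, 0 ≤ c i)
    (hc : Tendsto c atTop (𝓝 0)) :
    Tendsto u atTop (𝓝 0) := by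
  rw [Metric.tendsto_atTop]
  intro η hη
  -- choose i₂ ≥ i₁ with c i ≤ Δ for i ≥ i₂, where Δ := (1-θ)*(η/2)/2
  set Δ := (1 - θ) * (η / 2) / 2 with hΔdef
  have hΔ : 0 < Δ := by
    have h1θ : 0 < 1 - θ := by linarith
    rw [hΔdef]; positivity
  obtain ⟨i₂', hi₂'⟩ := (Metric.tendsto_atTop.mp hc Δ hΔ)
  set i₂ := max i₂' i₁ with hi₂def
  have hcle : ∀ i, i₂ ≤ i → c i ≤ Δ := by
    intro i hi
    have := hi₂' i (le_trans (le_max_left _ _) hi)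
    rw [Real.dist_eq, sub_zero, abs_of_nonneg (hc0 i)] at this
    exact this.le
  have hi₁₂ : i₁ ≤ i₂ := le_max_right _ _
  -- step: if u i > η/2 and i ≥ i₂ then u (i+1) ≤ u i - Δ
  have hstep : ∀ i, i₂ ≤ i → η / 2 < u i → u (i + 1) ≤ u i - Δ := by
    intro i hi hui
    have h1 : u (i + 1) ≤ θ * u i + c i := hrec i (le_trans hi₁₂ hi)
    have h2 : θ * u i + c i ≤ u i - Δ := by
      have : (1 - θ) * (η / 2) ≤ (1 - θ) * u i := by
        apply mul_le_mul_of_nonneg_left hui.le (by linarith)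
      have hc' := hcle i hi
      nlinarith
    linarith
  -- there exists i₃ ≥ i₂ with u i₃ ≤ η/2
  have hdrop : ∃ i₃, i₂ ≤ i₃ ∧ u i₃ ≤ η / 2 := by
    by_contra hcon
    push_neg at hcon
    have hdec : ∀ n : ℕ, u (i₂ + n) ≤ u i₂ - n * Δ := by
      intro n; induction n with
      | zero => simp
      | succ n ih =>
        have h1 := hstep (i₂ + n) (Nat.le_add_right _ _)
          (hcon (i₂ + n) (Nat.le_add_right _ _))
        push_cast
        have : u (i₂ + n + 1) ≤ u i₂ - n * Δ - Δ := by linarith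
        calc u (i₂ + (n + 1)) = u (i₂ + n + 1) := by ring_nf
        _ ≤ u i₂ - n * Δ - Δ := this
        _ ≤ u i₂ - (n + 1) * Δ := by ring_nf; linarith
    obtain ⟨n, hn⟩ := exists_nat_gt (u i₂ / Δ)
    have h1 := hdec n
    have h2 : u i₂ < n * Δ := by
      rwa [div_lt_iff₀ hΔ] at hn
    have h3 := hu0 (i₂ + n) (le_trans hi₁₂ (Nat.le_add_right _ _))
    linarith
  obtain ⟨i₃, hi₃, hu₃⟩ := hdrop
  -- persistence: ∀ i ≥ i₃, u i ≤ η/2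
  have hpers : ∀ n : ℕ, u (i₃ + n) ≤ η / 2 := by
    intro n; induction n with
    | zero => simpa
    | succ n ih =>
      have h1 := hrec (i₃ + n) (le_trans hi₁₂ (le_trans hi₃ (Nat.le_add_right _ _)))
      have h2 := hcle (i₃ + n) (le_trans hi₃ (Nat.le_add_right _ _))
      have : u (i₃ + n + 1) ≤ θ * (η/2) + Δ := by
        have := mul_le_mul_of_nonneg_left ih hθ0
        linarith
      have h4 : θ * (η/2) + Δ ≤ η/2 := by nlinarith
      calc u (i₃ + (n+1)) = u (i₃ + n + 1) := by ring_nf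
      _ ≤ η / 2 := by linarith
  refine ⟨i₃, fun n hn => ?_⟩
  rw [Real.dist_eq, sub_zero, abs_of_nonneg (hu0 n (le_trans hi₁₂ (le_trans hi₃ hn)))]
  have := hpers (n - i₃)
  rw [Nat.add_sub_cancel' hn] at this
  linarith

set_option maxHeartbeats 1000000 in
lemma main_aux {ι : Type*} [Fintype ι] (α β : ℝ) (hβ0 : 0 ≤ β) (hβα : β < α)
    (x ε S N : ℕ → ℝ) (y : ι → ℕ → ℝ)
    (hx0 : ∀ i, 0 ≤ x i) (hx1 : ∀ i, x i ≤ 1)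
    (hy0 : ∀ j i, 0 ≤ y j i) (hy1 : ∀ j i, y j i ≤ 1)
    (hN : ∀ i, 0 < N i) (hε0 : ∀ i, 0 ≤ ε i)
    (hpyth : ∀ i, 1 - S i ≤ x i ^ 2 + ∑ j, y j i ^ 2)
    (hrx : ∀ i, α * x i - ε i ≤ N i * x (i + 1))
    (hry : ∀ j i, N i * y j (i + 1) ≤ β * y j i + ε i)
    (hS : Tendsto S atTop (𝓝 0)) (hε : Tendsto ε atTop (𝓝 0))
    (δ : ℝ) (hδ : 0 < δ) (hfreq : ∃ᶠ i in atTop, δ ≤ x i) :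
    ∀ j, Tendsto (y j) atTop (𝓝 0) := by
  have hα : 0 < α := lt_of_le_of_lt hβ0 hβα
  have hαβ : 0 < α + β := by linarith
  have hαmβ : 0 < α - β := by linarith
  obtain ⟨R, hR, hRδ⟩ : ∃ R : ℝ, 0 < R ∧ 1 ≤ R * δ :=
    ⟨1/δ, by positivity, by rw [one_div, inv_mul_cancel₀ hδ.ne']⟩
  obtain ⟨K, hK, hKdef⟩ : ∃ K : ℝ, 0 ≤ K ∧ K = (Fintype.card ι : ℝ) :=
    ⟨_, Nat.cast_nonneg _, rfl⟩
  have hden : (0:ℝ) < 1 + K * R ^ 2 := by positivity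
  obtain ⟨δ', hδ', hδ'sq⟩ : ∃ t : ℝ, 0 < t ∧ t ^ 2 = (1/2) / (1 + K * R ^ 2) :=
    ⟨Real.sqrt ((1/2) / (1 + K * R ^ 2)), Real.sqrt_pos.mpr (by positivity),
      Real.sq_sqrt (by positivity)⟩
  obtain ⟨ε₀, hε₀, hε₀le1, hε₀le2⟩ :
      ∃ e : ℝ, 0 < e ∧ e ≤ δ' * (α - β) / 2 ∧ e ≤ R * (α - β) * δ' / (1 + R) :=
    ⟨min (δ' * (α - β) / 2) (R * (α - β) * δ' / (1 + R)),
      lt_min (by positivity) (by positivity), min_le_left _ _, min_le_right _ _⟩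
  -- i₀ : eventually properties
  have hev : ∀ᶠ i in atTop, ε i ≤ ε₀ ∧ S i ≤ 1/2 := by
    filter_upwards [hε.eventually (eventually_le_nhds hε₀),
      hS.eventually (eventually_le_nhds (by norm_num : (0:ℝ) < 1/2))] with i h1 h2
    exact ⟨h1, h2⟩
  obtain ⟨i₀, hi₀⟩ := eventually_atTop.mp hev
  obtain ⟨i₁, hi₁x, hi₁ge⟩ := (hfreq.and_eventually (eventually_ge_atTop i₀)).exists
  -- x lower bound from goodness
  have xlb : ∀ i, i₀ ≤ i → (∀ j, y j i ≤ R * x i) → δ' ≤ x i := by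
    intro i hi hg
    have hsum : ∑ j, y j i ^ 2 ≤ K * R ^ 2 * x i ^ 2 := by
      calc ∑ j, y j i ^ 2 ≤ ∑ _j : ι, (R * x i) ^ 2 := by
            apply Finset.sum_le_sum
            intro j _
            exact pow_le_pow_left₀ (hy0 j i) (hg j) 2
        _ = K * R ^ 2 * x i ^ 2 := by
            rw [Finset.sum_const, Finset.card_univ, nsmul_eq_mul, ← hKdef]
            ring
    have hSle := (hi₀ i hi).2
    have h2 : δ' ^ 2 ≤ x i ^ 2 := by
      rw [hδ'sq, div_le_iff₀ hden]
      have := hpyth i; nlinarith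
    calc δ' = Real.sqrt (δ' ^ 2) := (Real.sqrt_sq hδ'.le).symm
      _ ≤ Real.sqrt (x i ^ 2) := Real.sqrt_le_sqrt h2
      _ = x i := Real.sqrt_sq (hx0 i)
  -- invariant
  have step : ∀ i, i₀ ≤ i → (∀ j, y j i ≤ R * x i) → (∀ j, y j (i+1) ≤ R * x (i+1)) := by
    intro i hi hg j
    have hxi := xlb i hi hg
    have hεi := le_trans (hi₀ i hi).1 hε₀le2
    have key : β * (R * x i) + ε i ≤ R * (α * x i - ε i) := by
      have t1 : ε i * (1 + R) ≤ R * (α - β) * δ' := by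
        rw [le_div_iff₀ (by linarith : (0:ℝ) < 1 + R)] at hεi
        exact hεi
      have t2 : R * (α - β) * δ' ≤ R * (α - β) * x i :=
        mul_le_mul_of_nonneg_left hxi (by nlinarith)
      nlinarith
    have h2 : N i * y j (i+1) ≤ N i * (R * x (i+1)) := by
      calc N i * y j (i+1) ≤ β * y j i + ε i := hry j i
        _ ≤ β * (R * x i) + ε i := by nlinarith [hg j]
        _ ≤ R * (α * x i - ε i) := key
        _ ≤ R * (N i * x (i+1)) := mul_le_mul_of_nonneg_left (hrx i) hR.le
        _ = N i * (R * x (i+1)) := by ring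
    exact le_of_mul_le_mul_left h2 (hN i)
  have hgood : ∀ i, i₁ ≤ i → ∀ j, y j i ≤ R * x i := by
    have base : ∀ j, y j i₁ ≤ R * x i₁ := by
      intro j
      calc y j i₁ ≤ 1 := hy1 j i₁
        _ ≤ R * δ := hRδ
        _ ≤ R * x i₁ := mul_le_mul_of_nonneg_left hi₁x hR.le
    have ind : ∀ n, ∀ j, y j (i₁ + n) ≤ R * x (i₁ + n) := by
      intro n; induction n with
      | zero => simpa using base
      | succ n ih => exact step (i₁ + n) (le_trans hi₁ge (Nat.le_add_right _ _)) ih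
    intro i hi
    have := ind (i - i₁)
    rwa [Nat.add_sub_cancel' hi] at this
  have hxlb : ∀ i, i₁ ≤ i → δ' ≤ x i := fun i hi =>
    xlb i (le_trans hi₁ge hi) (hgood i hi)
  -- ratio recursion
  obtain ⟨θ, hθ0, hθ1, hθdef⟩ : ∃ t : ℝ, 0 ≤ t ∧ t < 1 ∧ t = 2 * β / (α + β) :=
    ⟨2 * β / (α + β), by positivity, by rw [div_lt_one hαβ]; linarith, rfl⟩
  obtain ⟨C, hC, hCdef⟩ : ∃ c : ℝ, 0 < c ∧ c = 2 / (δ' * (α + β)) :=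
    ⟨2 / (δ' * (α + β)), by positivity, rfl⟩
  intro j
  have hu0 : ∀ i, i₁ ≤ i → 0 ≤ y j i / x i := by
    intro i hi
    have := lt_of_lt_of_le hδ' (hxlb i hi)
    exact div_nonneg (hy0 j i) this.le
  have hurec : ∀ i, i₁ ≤ i → y j (i+1) / x (i+1) ≤ θ * (y j i / x i) + C * ε i := by
    intro i hi
    have hxi := hxlb i hi
    have hxi1 := hxlb (i+1) (le_trans hi (Nat.le_succ i))
    have hxipos : 0 < x i := lt_of_lt_of_le hδ' hxi
    have hxi1pos : 0 < x (i+1) := lt_of_lt_of_le hδ' hxi1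
    have hεi : ε i ≤ δ' * (α - β) / 2 :=
      le_trans ((hi₀ i (le_trans hi₁ge hi)).1) hε₀le1
    have hD : (α + β)/2 * x i ≤ α * x i - ε i := by
      have t : δ' * ((α - β)/2) ≤ x i * ((α - β)/2) :=
        mul_le_mul_of_nonneg_right hxi (by linarith)
      nlinarith
    have hDpos : 0 < α * x i - ε i := lt_of_lt_of_le (by positivity) hD
    have t1 : y j (i+1) * (α * x i - ε i) ≤ (β * y j i + ε i) * x (i+1) := by
      calc y j (i+1) * (α * x i - ε i) ≤ y j (i+1) * (N i * x (i+1)) :=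
            mul_le_mul_of_nonneg_left (hrx i) (hy0 j (i+1))
        _ = (N i * y j (i+1)) * x (i+1) := by ring
        _ ≤ (β * y j i + ε i) * x (i+1) :=
            mul_le_mul_of_nonneg_right (hry j i) hxi1pos.le
    have t2 : y j (i+1) / x (i+1) ≤ (β * y j i + ε i) / (α * x i - ε i) :=
      (div_le_div_iff₀ hxi1pos hDpos).mpr t1
    have hmid1 : (0:ℝ) < (α + β)/2 * x i := by positivity
    have hmid2 : (0:ℝ) < (α + β)/2 * δ' := by positivity
    have e1 : β * y j i / (α * x i - ε i) ≤ β * y j i / ((α + β)/2 * x i) :=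
      div_le_div_of_nonneg_left (mul_nonneg hβ0 (hy0 j i)) hmid1 hD
    have e2 : ε i / (α * x i - ε i) ≤ ε i / ((α + β)/2 * δ') := by
      apply div_le_div_of_nonneg_left (hε0 i) hmid2
      calc (α + β)/2 * δ' ≤ (α + β)/2 * x i :=
            mul_le_mul_of_nonneg_left hxi (by positivity)
        _ ≤ α * x i - ε i := hD
    have hxne : x i ≠ 0 := hxipos.ne'
    have habne : α + β ≠ 0 := hαβ.ne'
    have hδ'ne : δ' ≠ 0 := hδ'.ne'
    have t4 : β * y j i / ((α + β)/2 * x i) = θ * (y j i / x i) := by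
      rw [hθdef]
      field_simp
    have t5 : ε i / ((α + β)/2 * δ') = C * ε i := by
      rw [hCdef]
      field_simp
    calc y j (i+1) / x (i+1) ≤ (β * y j i + ε i) / (α * x i - ε i) := t2
      _ = β * y j i / (α * x i - ε i) + ε i / (α * x i - ε i) := by rw [add_div]
      _ ≤ β * y j i / ((α + β)/2 * x i) + ε i / ((α + β)/2 * δ') := add_le_add e1 e2
      _ = θ * (y j i / x i) + C * ε i := by rw [t4, t5]
  have hutend : Tendsto (fun i => y j i / x i) atTop (𝓝 0) :=
    vanish_rec θ hθ0 hθ1 _ (fun i => C * ε i) i₁ hu0 hurec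
      (fun i => mul_nonneg hC.le (hε0 i)) (by simpa using hε.const_mul C)
  -- squeeze y
  apply squeeze_zero' (g := fun i => y j i / x i)
  · filter_upwards [eventually_ge_atTop i₁] with i hi using hy0 j i
  · filter_upwards [eventually_ge_atTop i₁] with i hi
    have hxipos : 0 < x i := lt_of_lt_of_le hδ' (hxlb i hi)
    calc y j i = y j i / x i * x i := by field_simp
      _ ≤ y j i / x i * 1 := mul_le_mul_of_nonneg_left (hx1 i) (hu0 i hi)
      _ = y j i / x i := mul_one _
  · exact hutend


set_option maxHeartbeats 2000000 in
/-- Let `Λ` be a self-adjoint operator on a finite-dimensional complex inner product space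
whose distinct eigenvalues are `d 0 > d 1 > … > d (k-1)`, and let `A i` be invertible
operators with `A (i+1) ∘ (A i)⁻¹ → exp Λ`. Then for every `v ≠ 0` the limit
`d(v) = lim (log ‖A (i+1) v‖ - log ‖A i v‖)` exists and is one of the eigenvalues `d j`. -/
theorem stmt_1 {V : Type*} [NormedAddCommGroup V] [InnerProductSpace ℂ V]
    [FiniteDimensional ℂ V]
    (Λ : V →L[ℂ] V) (hΛ : IsSelfAdjoint Λ)
    (k : ℕ) (d : Fin k → ℝ) (hd : StrictAnti d)
    (heig : ∀ μ : ℂ, Module.End.HasEigenvalue (Λ : V →ₗ[ℂ] V) μ ↔ ∃ j, μ = (d j : ℂ))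
    (A : ℕ → (V ≃L[ℂ] V))
    (hA : Tendsto (fun i => ((A (i+1) : V →L[ℂ] V).comp ((A i).symm : V →L[ℂ] V)))
      atTop (𝓝 (NormedSpace.exp Λ)))
    (v : V) (hv : v ≠ 0) :
    ∃ j : Fin k, Tendsto (fun i => Real.log ‖A (i+1) v‖ - Real.log ‖A i v‖)
      atTop (𝓝 (d j)) := by
  classical
  have hsym : (Λ : V →ₗ[ℂ] V).IsSymmetric := hΛ.isSymmetric
  set n := Module.finrank ℂ V with hndef
  have hn : Module.finrank ℂ V = n := rfl
  set b := hsym.eigenvectorBasis hn with hbdef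
  set μ := hsym.eigenvalues hn with hμdef
  have hb : ∀ m, Λ (b m) = (μ m : ℂ) • b m := fun m => hsym.apply_eigenvectorBasis hn m
  have hμd : ∀ m, ∃ j, μ m = d j := by
    intro m
    obtain ⟨j, hj⟩ := (heig _).mp (hsym.hasEigenvalue_eigenvalues hn m)
    exact ⟨j, Complex.ofReal_inj.mp hj⟩
  choose jmap hjmap using hμd
  -- exp on basis vectors
  have hexpb : ∀ m, NormedSpace.exp Λ (b m) = ((Real.exp (μ m) : ℝ) : ℂ) • b m := by
    intro m
    rw [exp_eigen Λ ((μ m : ℝ) : ℂ) (b m) (hb m), ← Complex.exp_eq_exp_ℂ,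
      Complex.ofReal_exp]
  -- blocks
  set T : Fin k → Finset (Fin n) := fun j => Finset.univ.filter (fun m => jmap m = j) with hTdef
  set p : Fin k → V → V := fun j z => ∑ m ∈ T j, (inner ℂ (b m) z : ℂ) • b m with hpdef
  -- Pythagoras for full basis
  have hco_norm : ∀ z : V, ‖z‖ ^ 2 = ∑ m, ‖(inner ℂ (b m) z : ℂ)‖ ^ 2 := by
    intro z
    have h := b.orthonormal.inner_sum (fun m => (inner ℂ (b m) z : ℂ))
      (fun m => (inner ℂ (b m) z : ℂ)) Finset.univ
    rw [b.sum_repr'] at h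
    have h2 : (inner ℂ z z : ℂ) = ((‖z‖ ^ 2 : ℝ) : ℂ) := by
      rw [inner_self_eq_norm_sq_to_K]; norm_cast
    rw [h2] at h
    have h3 : ∀ m : Fin n, (starRingEnd ℂ) (inner ℂ (b m) z : ℂ) * (inner ℂ (b m) z : ℂ)
        = ((‖(inner ℂ (b m) z : ℂ)‖ ^ 2 : ℝ) : ℂ) := by
      intro m; rw [RCLike.conj_mul]; norm_cast
    simp_rw [h3] at h
    push_cast at h
    exact_mod_cast h
  -- block norms
  have hp_norm : ∀ j z, ‖p j z‖ ^ 2 = ∑ m ∈ T j, ‖(inner ℂ (b m) z : ℂ)‖ ^ 2 := by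
    intro j z
    have h := b.orthonormal.inner_sum (fun m => (inner ℂ (b m) z : ℂ))
      (fun m => (inner ℂ (b m) z : ℂ)) (T j)
    rw [show (∑ m ∈ T j, (inner ℂ (b m) z : ℂ) • b m) = p j z from rfl] at h
    have h2 : (inner ℂ (p j z) (p j z) : ℂ) = ((‖p j z‖ ^ 2 : ℝ) : ℂ) := by
      rw [inner_self_eq_norm_sq_to_K]; norm_cast
    rw [h2] at h
    have h3 : ∀ m : Fin n, (starRingEnd ℂ) (inner ℂ (b m) z : ℂ) * (inner ℂ (b m) z : ℂ)
        = ((‖(inner ℂ (b m) z : ℂ)‖ ^ 2 : ℝ) : ℂ) := by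
      intro m; rw [RCLike.conj_mul]; norm_cast
    simp_rw [h3] at h
    push_cast at h
    exact_mod_cast h
  have htotal : ∀ z : V, ∑ j, ‖p j z‖ ^ 2 = ‖z‖ ^ 2 := by
    intro z
    simp_rw [hp_norm]
    rw [hTdef]
    rw [Finset.sum_fiberwise_of_maps_to (fun m _ => Finset.mem_univ (jmap m))]
    exact (hco_norm z).symm
  have hp_le : ∀ j z, ‖p j z‖ ≤ ‖z‖ := by
    intro j z
    have h1 : ‖p j z‖ ^ 2 ≤ ‖z‖ ^ 2 := by
      rw [← htotal z]
      exact Finset.single_le_sum (f := fun j => ‖p j z‖ ^ 2)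
        (fun j _ => by positivity) (Finset.mem_univ j)
    calc ‖p j z‖ = Real.sqrt (‖p j z‖ ^ 2) := (Real.sqrt_sq (norm_nonneg _)).symm
      _ ≤ Real.sqrt (‖z‖ ^ 2) := Real.sqrt_le_sqrt h1
      _ = ‖z‖ := Real.sqrt_sq (norm_nonneg _)
  have hdecomp : ∀ z : V, ∑ j, p j z = z := by
    intro z
    rw [hpdef]
    simp only []
    rw [hTdef]
    rw [Finset.sum_fiberwise_of_maps_to (fun m _ => Finset.mem_univ (jmap m))
      (fun m => (inner ℂ (b m) z : ℂ) • b m)]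
    exact b.sum_repr' z
  have hexp_co : ∀ z m, (inner ℂ (b m) (NormedSpace.exp Λ z) : ℂ)
      = ((Real.exp (μ m) : ℝ) : ℂ) * inner ℂ (b m) z := by
    intro z m
    have key : NormedSpace.exp Λ z
        = ∑ m', (((Real.exp (μ m') : ℝ) : ℂ) * (inner ℂ (b m') z : ℂ)) • b m' := by
      conv_lhs => rw [← b.sum_repr' z]
      rw [map_sum]
      refine Finset.sum_congr rfl fun m' _ => ?_
      rw [map_smul, hexpb m', smul_smul, mul_comm]
    rw [key]
    exact b.orthonormal.inner_right_fintype _ m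
  have hp_exp : ∀ j z, p j (NormedSpace.exp Λ z) = ((Real.exp (d j) : ℝ) : ℂ) • p j z := by
    intro j z
    rw [hpdef]
    simp only []
    rw [Finset.smul_sum]
    refine Finset.sum_congr rfl fun m hm => ?_
    have hmj : jmap m = j := by
      rw [hTdef] at hm
      simpa using (Finset.mem_filter.mp hm).2
    rw [hexp_co, smul_smul, ← hmj, hjmap m]
  have hp_add : ∀ j (z z' : V), p j (z + z') = p j z + p j z' := by
    intro j z z'
    rw [hpdef]
    simp [inner_add_right, add_smul, Finset.sum_add_distrib]
  have hp_smul : ∀ j (c : ℂ) (z : V), p j (c • z) = c • p j z := by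
    intro j c z
    rw [hpdef]
    simp [inner_smul_right, Finset.smul_sum, smul_smul]
  have hexp_eq : ∀ z : V, NormedSpace.exp Λ z
      = ∑ j, ((Real.exp (d j) : ℝ) : ℂ) • p j z := by
    intro z
    conv_lhs => rw [← hdecomp (NormedSpace.exp Λ z)]
    exact Finset.sum_congr rfl fun j _ => hp_exp j z
  -- sequences
  set a : ℕ → V := fun i => A i v with hadef
  have ha0 : ∀ i, a i ≠ 0 := by
    intro i h
    apply hv
    have := congrArg (A i).symm h
    simpa [hadef] using this
  have hna : ∀ i, 0 < ‖a i‖ := fun i => norm_pos_iff.mpr (ha0 i)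
  set B : ℕ → V →L[ℂ] V :=
    fun i => ((A (i+1) : V →L[ℂ] V).comp ((A i).symm : V →L[ℂ] V)) with hBdef
  set ε : ℕ → ℝ := fun i => ‖B i - NormedSpace.exp Λ‖ with hεdef
  have hε0 : ∀ i, 0 ≤ ε i := fun i => norm_nonneg _
  have hεt : Tendsto ε atTop (𝓝 0) := by
    exact tendsto_iff_norm_sub_tendsto_zero.mp hA
  have hBa : ∀ i, B i (a i) = a (i+1) := by
    intro i; simp [hBdef, hadef]
  set w : ℕ → V := fun i => ((‖a i‖⁻¹ : ℝ) : ℂ) • a i with hwdef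
  have hw1 : ∀ i, ‖w i‖ = 1 := by
    intro i
    rw [hwdef]
    simp only [norm_smul, Complex.norm_real, Real.norm_eq_abs,
      abs_of_nonneg (inv_nonneg.mpr (norm_nonneg (a i)))]
    exact inv_mul_cancel₀ (hna i).ne'
  set N : ℕ → ℝ := fun i => ‖B i (w i)‖ with hNdef
  have hBw : ∀ i, B i (w i) = ((‖a i‖⁻¹ : ℝ) : ℂ) • a (i+1) := by
    intro i
    rw [hwdef]
    simp only [map_smul]
    rw [hBa]
  have hNval : ∀ i, N i = ‖a i‖⁻¹ * ‖a (i+1)‖ := by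
    intro i
    rw [hNdef]
    simp only [hBw, norm_smul, Complex.norm_real, Real.norm_eq_abs,
      abs_of_nonneg (inv_nonneg.mpr (norm_nonneg (a i)))]
  have hN : ∀ i, 0 < N i := by
    intro i
    rw [hNval]
    exact mul_pos (inv_pos.mpr (hna i)) (hna (i+1))
  have hwsucc : ∀ i, w (i+1) = (((N i)⁻¹ : ℝ) : ℂ) • B i (w i) := by
    intro i
    rw [hBw, smul_smul, hwdef]
    simp only []
    congr 1
    have hre : (N i)⁻¹ * ‖a i‖⁻¹ = ‖a (i+1)‖⁻¹ := by
      rw [hNval]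
      have h1 := (hna i).ne'
      have h2 := (hna (i+1)).ne'
      field_simp
    exact_mod_cast hre.symm
  set q : Fin k → ℕ → ℝ := fun j i => ‖p j (w i)‖ with hqdef
  have hq0 : ∀ j i, 0 ≤ q j i := fun j i => norm_nonneg _
  have hq1 : ∀ j i, q j i ≤ 1 := by
    intro j i
    rw [hqdef]
    calc ‖p j (w i)‖ ≤ ‖w i‖ := hp_le j (w i)
      _ = 1 := hw1 i
  have hqpyth : ∀ i, ∑ j, q j i ^ 2 = 1 := by
    intro i
    rw [hqdef]
    simp only []
    rw [htotal (w i), hw1 i, one_pow]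
  -- recursion core
  have hcore : ∀ j i, p j (w (i+1)) = (((N i)⁻¹ : ℝ) : ℂ) •
      (((Real.exp (d j) : ℝ) : ℂ) • p j (w i) + p j ((B i - NormedSpace.exp Λ) (w i))) := by
    intro j i
    rw [hwsucc i, hp_smul]
    congr 1
    have hsplit : B i (w i) = NormedSpace.exp Λ (w i)
        + (B i - NormedSpace.exp Λ) (w i) := by
      simp [ContinuousLinearMap.sub_apply]
    rw [hsplit, hp_add, hp_exp]
  have hEb : ∀ j i, ‖p j ((B i - NormedSpace.exp Λ) (w i))‖ ≤ ε i := by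
    intro j i
    calc ‖p j ((B i - NormedSpace.exp Λ) (w i))‖
        ≤ ‖(B i - NormedSpace.exp Λ) (w i)‖ := hp_le _ _
      _ ≤ ‖B i - NormedSpace.exp Λ‖ * ‖w i‖ := ContinuousLinearMap.le_opNorm _ _
      _ = ε i := by rw [hw1 i, mul_one, hεdef]
  have hNq : ∀ j i, N i * q j (i+1) =
      ‖((Real.exp (d j) : ℝ) : ℂ) • p j (w i) + p j ((B i - NormedSpace.exp Λ) (w i))‖ := by
    intro j i
    rw [hqdef]
    simp only []
    rw [hcore j i, norm_smul, Complex.norm_real, Real.norm_eq_abs,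
      abs_of_nonneg (inv_nonneg.mpr (hN i).le), ← mul_assoc,
      mul_inv_cancel₀ (hN i).ne', one_mul]
  have hexpnorm : ∀ j z, ‖((Real.exp (d j) : ℝ) : ℂ) • (z : V)‖ = Real.exp (d j) * ‖z‖ := by
    intro j z
    rw [norm_smul, Complex.norm_real, Real.norm_eq_abs, abs_of_pos (Real.exp_pos _)]
  have hupper : ∀ j i, N i * q j (i+1) ≤ Real.exp (d j) * q j i + ε i := by
    intro j i
    rw [hNq j i]
    calc ‖((Real.exp (d j) : ℝ) : ℂ) • p j (w i) + p j ((B i - NormedSpace.exp Λ) (w i))‖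
        ≤ ‖((Real.exp (d j) : ℝ) : ℂ) • p j (w i)‖
          + ‖p j ((B i - NormedSpace.exp Λ) (w i))‖ := norm_add_le _ _
      _ ≤ Real.exp (d j) * q j i + ε i := by
          rw [hexpnorm]
          exact add_le_add le_rfl (hEb j i)
  have hlower : ∀ j i, Real.exp (d j) * q j i - ε i ≤ N i * q j (i+1) := by
    intro j i
    rw [hNq j i]
    have h1 : ‖((Real.exp (d j) : ℝ) : ℂ) • p j (w i)‖
        ≤ ‖((Real.exp (d j) : ℝ) : ℂ) • p j (w i) + p j ((B i - NormedSpace.exp Λ) (w i))‖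
          + ‖p j ((B i - NormedSpace.exp Λ) (w i))‖ := by
      have := norm_add_le (((Real.exp (d j) : ℝ) : ℂ) • p j (w i)
        + p j ((B i - NormedSpace.exp Λ) (w i)))
        (-(p j ((B i - NormedSpace.exp Λ) (w i))))
      simpa using this
    rw [hexpnorm] at h1
    have := hEb j i
    linarith
  -- choice of the dominant index
  have hexj : ∃ j, ¬ Tendsto (q j) atTop (𝓝 0) := by
    by_contra hcon
    push_neg at hcon
    have hsum : Tendsto (fun i => ∑ j, q j i ^ 2) atTop (𝓝 0) := by
      have h := tendsto_finset_sum (Finset.univ : Finset (Fin k))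
        (fun j _ => ((hcon j).pow 2))
      simpa using h
    have hone : Tendsto (fun _ : ℕ => (1 : ℝ)) atTop (𝓝 0) :=
      hsum.congr fun i => hqpyth i
    exact zero_ne_one (tendsto_nhds_unique hone tendsto_const_nhds)
  set s : Finset (Fin k) :=
    Finset.univ.filter (fun j => ¬ Tendsto (q j) atTop (𝓝 0)) with hsdef
  have hsne : s.Nonempty := by
    obtain ⟨j, hj⟩ := hexj
    exact ⟨j, Finset.mem_filter.mpr ⟨Finset.mem_univ _, hj⟩⟩
  set j₀ := s.min' hsne with hj₀def
  have hj₀ : ¬ Tendsto (q j₀) atTop (𝓝 0) :=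
    (Finset.mem_filter.mp (s.min'_mem hsne)).2
  have hlt : ∀ j, j < j₀ → Tendsto (q j) atTop (𝓝 0) := by
    intro j hj
    by_contra hc
    have hjs : j ∈ s := Finset.mem_filter.mpr ⟨Finset.mem_univ _, hc⟩
    exact absurd (s.min'_le j hjs) (not_le.mpr hj)
  obtain ⟨δ, hδ, hfreq⟩ : ∃ δ > 0, ∃ᶠ i in atTop, δ ≤ q j₀ i := by
    rw [Metric.tendsto_atTop] at hj₀
    push_neg at hj₀
    obtain ⟨δ, hδpos, hδ'⟩ := hj₀
    refine ⟨δ, hδpos, ?_⟩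
    rw [frequently_atTop]
    intro i₀
    obtain ⟨i, hi, hdist⟩ := hδ' i₀
    refine ⟨i, hi, ?_⟩
    rw [Real.dist_eq, sub_zero, abs_of_nonneg (hq0 _ _)] at hdist
    exact hdist
  set α := Real.exp (d j₀) with hαdef
  have hαpos : 0 < α := Real.exp_pos _
  obtain ⟨β, hβ0, hβα, hcov⟩ :
      ∃ β : ℝ, 0 ≤ β ∧ β < α ∧ ∀ j, j₀ < j → Real.exp (d j) ≤ β := by
    by_cases hk1 : (j₀ : ℕ) + 1 < k
    · refine ⟨Real.exp (d ⟨(j₀ : ℕ) + 1, hk1⟩), (Real.exp_pos _).le, ?_, ?_⟩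
      · exact Real.exp_lt_exp.mpr (hd (by simp [Fin.lt_def]))
      · intro j hj
        apply Real.exp_le_exp.mpr
        apply hd.antitone
        have h1 : (j₀ : ℕ) < (j : ℕ) := hj
        show ((⟨(j₀ : ℕ) + 1, hk1⟩ : Fin k) : ℕ) ≤ (j : ℕ)
        simp only [Fin.val_mk]
        omega
    · refine ⟨α/2, by positivity, by linarith, ?_⟩
      intro j hj
      exfalso
      have h1 : (j₀ : ℕ) < (j : ℕ) := hj
      have h2 := j.isLt
      omega
  -- split of the Pythagoras identity
  have hins : Finset.univ.filter (fun j => ¬ j < j₀)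
      = insert j₀ (Finset.univ.filter (fun j => j₀ < j)) := by
    ext j
    simp only [Finset.mem_filter, Finset.mem_univ, true_and, Finset.mem_insert, not_lt]
    constructor
    · intro h
      rcases eq_or_lt_of_le h with h | h
      · exact Or.inl h.symm
      · exact Or.inr h
    · rintro (h | h)
      · exact h.ge
      · exact h.le
  have hsplit : ∀ i, (1 : ℝ) =
      (∑ j ∈ Finset.univ.filter (fun j => j < j₀), q j i ^ 2)
      + (q j₀ i ^ 2 + ∑ j ∈ Finset.univ.filter (fun j => j₀ < j), q j i ^ 2) := by
    intro i
    rw [← hqpyth i,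
      ← Finset.sum_filter_add_sum_filter_not Finset.univ (fun j => j < j₀)
        (fun j => q j i ^ 2)]
    congr 1
    rw [hins, Finset.sum_insert (by simp)]
  have hsubty : ∀ i, (∑ j : {j : Fin k // j₀ < j}, q j.1 i ^ 2)
      = ∑ j ∈ Finset.univ.filter (fun j => j₀ < j), q j i ^ 2 := by
    intro i
    exact (Finset.sum_subtype (Finset.univ.filter (fun j => j₀ < j))
      (fun j => by simp) (fun j => q j i ^ 2)).symm
  have hpythm : ∀ i, 1 - (∑ j ∈ Finset.univ.filter (fun j => j < j₀), q j i ^ 2)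
      ≤ q j₀ i ^ 2 + ∑ j : {j : Fin k // j₀ < j}, q j.1 i ^ 2 := by
    intro i
    rw [hsubty i]
    linarith [hsplit i]
  have hStend : Tendsto
      (fun i => ∑ j ∈ Finset.univ.filter (fun j => j < j₀), q j i ^ 2) atTop (𝓝 0) := by
    have h := tendsto_finset_sum (Finset.univ.filter (fun j => j < j₀))
      (fun j hj => ((hlt j (by simpa using (Finset.mem_filter.mp hj).2)).pow 2))
    simpa using h
  have hrxm : ∀ i, α * q j₀ i - ε i ≤ N i * q j₀ (i + 1) := fun i => hlower j₀ i
  have hrym : ∀ (j : {j : Fin k // j₀ < j}) i,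
      N i * q j.1 (i + 1) ≤ β * q j.1 i + ε i := by
    intro j i
    refine le_trans (hupper j.1 i) ?_
    have := mul_le_mul_of_nonneg_right (hcov j.1 j.2) (hq0 j.1 i)
    linarith
  have hmain := main_aux (ι := {j : Fin k // j₀ < j}) α β hβ0 hβα
    (q j₀) ε (fun i => ∑ j ∈ Finset.univ.filter (fun j => j < j₀), q j i ^ 2) N
    (fun j i => q j.1 i)
    (fun i => hq0 j₀ i) (fun i => hq1 j₀ i)
    (fun j i => hq0 j.1 i) (fun j i => hq1 j.1 i)
    hN hε0 hpythm hrxm hrym hStend hεt δ hδ hfreq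
  have hzero : ∀ j, j ≠ j₀ → Tendsto (q j) atTop (𝓝 0) := by
    intro j hj
    rcases lt_or_gt_of_ne hj with h | h
    · exact hlt j h
    · exact hmain ⟨j, h⟩
  -- convergence of N to α
  have hwexp : ∀ i, NormedSpace.exp Λ (w i) - ((α : ℝ) : ℂ) • w i
      = ∑ j, (((Real.exp (d j) - α : ℝ)) : ℂ) • p j (w i) := by
    intro i
    rw [hexp_eq (w i)]
    nth_rewrite 2 [← hdecomp (w i)]
    rw [Finset.smul_sum, ← Finset.sum_sub_distrib]
    refine Finset.sum_congr rfl fun j _ => ?_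
    rw [← sub_smul]
    push_cast
    ring_nf
  have hbound : ∀ i, dist (N i) α ≤ ε i
      + ∑ j ∈ Finset.univ.erase j₀, (Real.exp (d j) + α) * q j i := by
    intro i
    have h1 : ‖NormedSpace.exp Λ (w i) - ((α : ℝ) : ℂ) • w i‖
        ≤ ∑ j ∈ Finset.univ.erase j₀, (Real.exp (d j) + α) * q j i := by
      rw [hwexp i]
      calc ‖∑ j, (((Real.exp (d j) - α : ℝ)) : ℂ) • p j (w i)‖
          ≤ ∑ j, ‖(((Real.exp (d j) - α : ℝ)) : ℂ) • p j (w i)‖ :=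
            norm_sum_le _ _
        _ = ∑ j, |Real.exp (d j) - α| * q j i := by
            refine Finset.sum_congr rfl fun j _ => ?_
            rw [norm_smul, Complex.norm_real, Real.norm_eq_abs, hqdef]
        _ = |Real.exp (d j₀) - α| * q j₀ i
            + ∑ j ∈ Finset.univ.erase j₀, |Real.exp (d j) - α| * q j i :=
            (Finset.add_sum_erase _ _ (Finset.mem_univ j₀)).symm
        _ ≤ ∑ j ∈ Finset.univ.erase j₀, (Real.exp (d j) + α) * q j i := by
            rw [hαdef, sub_self, abs_zero, zero_mul, zero_add]
            refine Finset.sum_le_sum fun j _ => ?_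
            refine mul_le_mul_of_nonneg_right ?_ (hq0 j i)
            calc |Real.exp (d j) - α| ≤ |Real.exp (d j)| + |α| := abs_sub _ _
              _ = Real.exp (d j) + α := by
                  rw [abs_of_pos (Real.exp_pos _), abs_of_pos hαpos]
    have h2 : ‖((α : ℝ) : ℂ) • w i‖ = α := by
      rw [norm_smul, Complex.norm_real, Real.norm_eq_abs, abs_of_pos hαpos, hw1 i, mul_one]
    have h3 : |N i - α| ≤ ‖B i (w i) - ((α : ℝ) : ℂ) • w i‖ := by
      have h5 := abs_norm_sub_norm_le (B i (w i)) (((α : ℝ) : ℂ) • w i)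
      rw [h2] at h5
      exact h5
    have h4 : ‖B i (w i) - ((α : ℝ) : ℂ) • w i‖
        ≤ ε i + ‖NormedSpace.exp Λ (w i) - ((α : ℝ) : ℂ) • w i‖ := by
      have heq : B i (w i) - ((α : ℝ) : ℂ) • w i
          = (B i - NormedSpace.exp Λ) (w i)
            + (NormedSpace.exp Λ (w i) - ((α : ℝ) : ℂ) • w i) := by
        simp [ContinuousLinearMap.sub_apply]
      rw [heq]
      refine le_trans (norm_add_le _ _) ?_
      have h5 : ‖(B i - NormedSpace.exp Λ) (w i)‖ ≤ ε i := by
        calc ‖(B i - NormedSpace.exp Λ) (w i)‖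
            ≤ ‖B i - NormedSpace.exp Λ‖ * ‖w i‖ := ContinuousLinearMap.le_opNorm _ _
          _ = ε i := by rw [hw1 i, mul_one, hεdef]
      linarith
    rw [Real.dist_eq]
    linarith
  have hNtend : Tendsto N atTop (𝓝 α) := by
    rw [tendsto_iff_dist_tendsto_zero]
    apply squeeze_zero (fun i => dist_nonneg) hbound
    have hsum0 : Tendsto
        (fun i => ∑ j ∈ Finset.univ.erase j₀, (Real.exp (d j) + α) * q j i)
        atTop (𝓝 0) := by
      have h := tendsto_finset_sum (Finset.univ.erase j₀)
        (fun j hj => (hzero j (Finset.mem_erase.mp hj).1).const_mul (Real.exp (d j) + α))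
      simpa using h
    simpa using hεt.add hsum0
  -- conclusion
  refine ⟨j₀, ?_⟩
  have hlog : Tendsto (fun i => Real.log (N i)) atTop (𝓝 (d j₀)) := by
    have hcont : ContinuousAt Real.log α := Real.continuousAt_log hαpos.ne'
    have h := hcont.tendsto.comp hNtend
    rw [hαdef, Real.log_exp] at h
    exact h
  apply hlog.congr
  intro i
  rw [hNval i, Real.log_mul (inv_ne_zero (hna i).ne') (hna (i+1)).ne', Real.log_inv]
  have : a i = A i v := rfl
  have h2 : a (i+1) = A (i+1) v := rfl
  rw [this, h2]
  ring
end

section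
/- Let v ∈ V with v ≠ 0 and let d(v) = lim_{i→∞}(log‖A_{i+1}v‖ − log‖A_i v‖) (which exists and is an eigenvalue of Λ). If w ∈ V is the limit of a subsequence of the normalized vectors A_{i} v / ‖A_{i} v‖, then Λ w = d(v) · w; in particular w is a unit eigenvector of Λ with eigenvalue d(v). -/
open Filter Topology
open scoped InnerProductSpace

section aux
variable {V : Type*} [NormedAddCommGroup V] [InnerProductSpace ℂ V]

theorem exp_apply_eig [CompleteSpace V] (T : V →L[ℂ] V) (u : V) (μ : ℂ) (h : T u = μ • u) :
    NormedSpace.exp T u = NormedSpace.exp μ • u := by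
  have hpow : ∀ n : ℕ, (T ^ n) u = μ ^ n • u := by
    intro n
    induction n with
    | zero => simp
    | succ n ih =>
      rw [pow_succ, ContinuousLinearMap.mul_apply, h, map_smul, ih, smul_smul, ← pow_succ']
  have hsum : Summable fun n : ℕ => ((n.factorial : ℂ))⁻¹ • T ^ n :=
    NormedSpace.expSeries_summable' (𝕂 := ℂ) T
  have hmap := (ContinuousLinearMap.apply ℂ V u).map_tsum hsum
  rw [NormedSpace.exp_eq_tsum ℂ]
  rw [show (∑' n : ℕ, ((n.factorial : ℂ))⁻¹ • T ^ n) u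
      = (ContinuousLinearMap.apply ℂ V u) (∑' n : ℕ, ((n.factorial : ℂ))⁻¹ • T ^ n) from rfl,
    hmap]
  simp only [ContinuousLinearMap.apply_apply, ContinuousLinearMap.smul_apply, hpow, smul_smul]
  rw [Summable.tsum_smul_const (by simpa [smul_eq_mul] using NormedSpace.expSeries_summable' (𝕂 := ℂ) μ),
    NormedSpace.exp_eq_tsum ℂ]
  simp [smul_eq_mul]

theorem pow_apply_eig [CompleteSpace V] (T : V →L[ℂ] V) (u : V) (μ : ℂ) (h : T u = μ • u) :
    ∀ n : ℕ, (T ^ n) u = μ ^ n • u := by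
  intro n
  induction n with
  | zero => simp
  | succ n ih =>
    rw [pow_succ, ContinuousLinearMap.mul_apply, h, map_smul, ih, smul_smul, ← pow_succ']

theorem le_exp_vanish {t a : ℝ} (ht : 0 ≤ t) (ha : a < 0)
    (h : ∀ n : ℕ, t ≤ Real.exp (n * a)) : t = 0 := by
  have h0 : Tendsto (fun n : ℕ => Real.exp a ^ n) atTop (𝓝 0) :=
    tendsto_pow_atTop_nhds_zero_of_lt_one (Real.exp_pos a).le (Real.exp_lt_one_iff.2 ha)
  have h1 : t ≤ 0 := ge_of_tendsto' h0 fun n => by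
    rw [← Real.exp_nat_mul]; exact h n
  linarith

end aux

/-- With `Λ`, `d`, `A` as in the setup, if `v ≠ 0`, `d(v) = c` is the limit of
`log ‖A (i+1) v‖ - log ‖A i v‖`, and `w` is the limit of a subsequence of the normalized
vectors `A i v / ‖A i v‖`, then `Λ w = c • w` and `‖w‖ = 1`. -/
theorem stmt_2 {V : Type*} [NormedAddCommGroup V] [InnerProductSpace ℂ V]
    [FiniteDimensional ℂ V]
    (Λ : V →L[ℂ] V) (hΛ : IsSelfAdjoint Λ)
    (k : ℕ) (d : Fin k → ℝ) (hd : StrictAnti d)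
    (heig : ∀ μ : ℂ, Module.End.HasEigenvalue (Λ : V →ₗ[ℂ] V) μ ↔ ∃ j, μ = (d j : ℂ))
    (A : ℕ → (V ≃L[ℂ] V))
    (hA : Tendsto (fun i => ((A (i+1) : V →L[ℂ] V).comp ((A i).symm : V →L[ℂ] V)))
      atTop (𝓝 (NormedSpace.exp Λ)))
    (v : V) (hv : v ≠ 0) (c : ℝ)
    (hc : Tendsto (fun i => Real.log ‖A (i+1) v‖ - Real.log ‖A i v‖) atTop (𝓝 c))
    (w : V) (φ : ℕ → ℕ) (hφ : StrictMono φ)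
    (hw : Tendsto (fun m => ‖A (φ m) v‖⁻¹ • (A (φ m) v)) atTop (𝓝 w)) :
    Λ w = (c : ℂ) • w ∧ ‖w‖ = 1 := by
  have hr : ∀ i, (0:ℝ) < ‖A i v‖ := fun i =>
    norm_pos_iff.2 (by simp [hv])
  set u : ℕ → V := fun i => ‖A i v‖⁻¹ • (A i v) with hu
  -- norm of w
  have hwnorm : ‖w‖ = 1 := by
    have h1 : Tendsto (fun m => ‖u (φ m)‖) atTop (𝓝 ‖w‖) := hw.norm
    have h2 : (fun m => ‖u (φ m)‖) = fun _ => 1 := by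
      funext m
      rw [hu]
      rw [norm_smul, Real.norm_eq_abs, abs_of_nonneg (inv_nonneg.2 (hr (φ m)).le),
        inv_mul_cancel₀ (hr (φ m)).ne']
    rw [h2] at h1
    exact tendsto_nhds_unique h1 tendsto_const_nhds
  refine ⟨?_, hwnorm⟩
  -- operators
  set C : ℕ → ℕ → (V →L[ℂ] V) :=
    fun n i => ((A (i+n) : V →L[ℂ] V).comp ((A i).symm : V →L[ℂ] V)) with hC
  set D : ℕ → ℕ → (V →L[ℂ] V) :=
    fun n i => ((A i : V →L[ℂ] V).comp ((A (i+n)).symm : V →L[ℂ] V)) with hD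
  have hCD : ∀ n i, C n i * D n i = 1 := by
    intro n i
    ext x
    simp [hC, hD, ContinuousLinearMap.mul_apply]
  have hDC : ∀ n i, D n i * C n i = 1 := by
    intro n i
    ext x
    simp [hC, hD, ContinuousLinearMap.mul_apply]
  have hCtend : ∀ n, Tendsto (C n) atTop (𝓝 (NormedSpace.exp Λ ^ n)) := by
    intro n
    induction n with
    | zero =>
      have : C 0 = fun _ => 1 := by
        funext i
        ext x
        simp [hC]
      rw [this, pow_zero]
      exact tendsto_const_nhds
    | succ n ih =>
      have key : C (n+1) = fun i => C 1 (i+n) * C n i := by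
        funext i
        ext x
        simp [hC, ContinuousLinearMap.mul_apply, ← add_assoc]
      rw [key, pow_succ']
      exact ((hA.comp (tendsto_add_atTop_nat n)).mul ih)
  have hDtend : ∀ n, Tendsto (D n) atTop (𝓝 (NormedSpace.exp (-Λ) ^ n)) := by
    intro n
    letI : NormedAlgebra ℚ (V →L[ℂ] V) := .restrictScalars ℚ ℂ (V →L[ℂ] V)
    have hexpU : IsUnit (NormedSpace.exp Λ ^ n) := (NormedSpace.isUnit_exp Λ).pow n
    have hcont := (NormedRing.inverse_continuousAt hexpU.unit).tendsto
    rw [hexpU.unit_spec] at hcont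
    have h2 := hcont.comp (hCtend n)
    have h3 : (Ring.inverse ∘ C n) = D n := by
      funext i
      exact Ring.inverse_unit ⟨C n i, D n i, hCD n i, hDC n i⟩
    rw [h3] at h2
    rwa [← Ring.inverse_pow, Ring.inverse_exp] at h2
  -- logs
  have hlog : ∀ n, Tendsto (fun i => Real.log ‖A (i+n) v‖ - Real.log ‖A i v‖)
      atTop (𝓝 (n * c)) := by
    intro n
    induction n with
    | zero => simpa using tendsto_const_nhds
    | succ n ih =>
      have h1 := (hc.comp (tendsto_add_atTop_nat n)).add ih
      have h2 : (fun i => (Real.log ‖A (i+n+1) v‖ - Real.log ‖A (i+n) v‖)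
          + (Real.log ‖A (i+n) v‖ - Real.log ‖A i v‖))
          = fun i => Real.log ‖A (i+(n+1)) v‖ - Real.log ‖A i v‖ := by
        funext i
        rw [show i + (n+1) = i + n + 1 from by ring]
        ring
      rw [show (((n+1):ℕ):ℝ) * c = c + (n:ℝ) * c from by push_cast; ring]
      exact h2 ▸ h1
  -- applying C to u
  have hCu : ∀ n i, C n i (u i) = ‖A i v‖⁻¹ • (A (i+n) v) := by
    intro n i
    rw [hu]
    simp only [hC]
    rw [ContinuousLinearMap.map_smul_of_tower]
    simp
  have hCunorm : ∀ n i, ‖C n i (u i)‖ =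
      Real.exp (Real.log ‖A (i+n) v‖ - Real.log ‖A i v‖) := by
    intro n i
    rw [hCu, norm_smul, Real.norm_eq_abs, abs_of_nonneg (inv_nonneg.2 (hr i).le),
      Real.exp_sub, Real.exp_log (hr (i+n)), Real.exp_log (hr i), inv_mul_eq_div]
  have happly : ∀ (S : V →L[ℂ] V) (T : ℕ → (V →L[ℂ] V)),
      Tendsto T atTop (𝓝 S) →
      Tendsto (fun m => (T (φ m)) (u (φ m))) atTop (𝓝 (S w)) := by
    intro S T hT
    have h1 : Tendsto (fun m => (T (φ m), u (φ m))) atTop (𝓝 (S, w)) :=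
      (hT.comp hφ.tendsto_atTop).prodMk_nhds hw
    exact (isBoundedBilinearMap_apply.continuous.tendsto (S, w)).comp h1
  -- forward norms
  have hfwd : ∀ n : ℕ, ‖(NormedSpace.exp Λ ^ n) w‖ = Real.exp (n * c) := by
    intro n
    have h1 := (happly _ (C n) (hCtend n)).norm
    have h2 : Tendsto (fun m => ‖C n (φ m) (u (φ m))‖) atTop (𝓝 (Real.exp (n * c))) := by
      have h3 : Tendsto (fun m => Real.log ‖A (φ m + n) v‖ - Real.log ‖A (φ m) v‖)
          atTop (𝓝 (n * c)) := (hlog n).comp hφ.tendsto_atTop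
      have h4 := (Real.continuous_exp.tendsto _).comp h3
      refine h4.congr fun m => ?_
      simp only [Function.comp_apply, hCunorm]
    exact tendsto_nhds_unique h1 h2
  -- backward norms
  have hbwd : ∀ n : ℕ, ‖(NormedSpace.exp (-Λ) ^ n) w‖ = Real.exp (-(n * c)) := by
    intro n
    set F : ℕ → (V →L[ℂ] V) :=
      fun i => ((A (i-n) : V →L[ℂ] V).comp ((A i).symm : V →L[ℂ] V)) with hF
    have hge : ∀ᶠ i in atTop, n ≤ i := eventually_atTop.2 ⟨n, fun m hm => hm⟩
    have hFtend : Tendsto F atTop (𝓝 (NormedSpace.exp (-Λ) ^ n)) := by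
      have h1 := (hDtend n).comp (tendsto_sub_atTop_nat n)
      refine h1.congr' ?_
      filter_upwards [hge] with i hi
      simp only [Function.comp_apply, hD, hF, Nat.sub_add_cancel hi]
    have h1 := (happly _ F hFtend).norm
    have h2 : Tendsto (fun m => ‖F (φ m) (u (φ m))‖) atTop (𝓝 (Real.exp (-(n * c)))) := by
      have h3 : Tendsto (fun i => Real.log ‖A (i-n) v‖ - Real.log ‖A i v‖)
          atTop (𝓝 (-(n * c))) := by
        have h4 := ((hlog n).comp (tendsto_sub_atTop_nat n)).neg
        refine h4.congr' ?_
        filter_upwards [hge] with i hi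
        simp only [Function.comp_apply, Nat.sub_add_cancel hi]
        ring
      have h5 := (Real.continuous_exp.tendsto _).comp (h3.comp hφ.tendsto_atTop)
      refine h5.congr fun m => ?_
      have hFu : F (φ m) (u (φ m)) = ‖A (φ m) v‖⁻¹ • (A (φ m - n) v) := by
        rw [hu]
        simp only [hF]
        rw [ContinuousLinearMap.map_smul_of_tower]
        simp
      simp only [Function.comp_apply]
      rw [hFu, norm_smul, Real.norm_eq_abs, abs_of_nonneg (inv_nonneg.2 (hr (φ m)).le),
        Real.exp_sub, Real.exp_log (hr (φ m - n)), Real.exp_log (hr (φ m)), inv_mul_eq_div]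
    exact tendsto_nhds_unique h1 h2
  -- spectral decomposition
  have hsym : (Λ : V →ₗ[ℂ] V).IsSymmetric := hΛ.isSymmetric
  set n0 := Module.finrank ℂ V with hn0
  set b := hsym.eigenvectorBasis hn0.symm with hbdef
  set μ := hsym.eigenvalues hn0.symm with hμdef
  have hb : ∀ i, Λ (b i) = ((μ i : ℝ) : ℂ) • b i := fun i =>
    hsym.apply_eigenvectorBasis hn0.symm i
  set t : Fin n0 → ℝ := fun i => ‖b.repr w i‖^2 with ht
  have keynorm : ∀ (S : V →L[ℂ] V), IsSelfAdjoint S → ∀ (ρ : Fin n0 → ℝ),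
      (∀ i, S (b i) = ((ρ i : ℝ) : ℂ) • b i) →
      ‖S w‖^2 = ∑ i, (ρ i)^2 * t i := by
    intro S hS ρ hρ
    have h1 : ‖S w‖ = ‖b.repr (S w)‖ := (b.repr.norm_map (S w)).symm
    rw [h1, EuclideanSpace.norm_eq, Real.sq_sqrt (by positivity)]
    refine Finset.sum_congr rfl fun i _ => ?_
    have h3 : ⟪b i, S w⟫_ℂ = ⟪S (b i), w⟫_ℂ := (hS.isSymmetric (b i) w).symm
    have h2 : b.repr (S w) i = ((ρ i : ℝ):ℂ) * b.repr w i := by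
      rw [b.repr_apply_apply, b.repr_apply_apply, h3, hρ i, inner_smul_left]
      simp [Complex.conj_ofReal]
    rw [h2, norm_mul, mul_pow, Complex.norm_real, Real.norm_eq_abs, sq_abs]
  have hbexp : ∀ (n : ℕ) (i : Fin n0),
      (NormedSpace.exp Λ ^ n) (b i) = ((Real.exp (μ i) ^ n : ℝ) : ℂ) • b i := by
    intro n i
    have h1 : NormedSpace.exp Λ (b i) = ((Real.exp (μ i) : ℝ) : ℂ) • b i := by
      rw [exp_apply_eig Λ (b i) _ (hb i), ← Complex.exp_eq_exp_ℂ, Complex.ofReal_exp]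
    rw [pow_apply_eig _ _ _ h1 n, Complex.ofReal_pow]
  have hbexpneg : ∀ (n : ℕ) (i : Fin n0),
      (NormedSpace.exp (-Λ) ^ n) (b i) = ((Real.exp (-μ i) ^ n : ℝ) : ℂ) • b i := by
    intro n i
    have h0 : (-Λ) (b i) = ((-μ i : ℝ) : ℂ) • b i := by
      rw [ContinuousLinearMap.neg_apply, hb i, Complex.ofReal_neg, neg_smul]
    have h1 : NormedSpace.exp (-Λ) (b i) = ((Real.exp (-μ i) : ℝ) : ℂ) • b i := by
      rw [exp_apply_eig (-Λ) (b i) _ h0, ← Complex.exp_eq_exp_ℂ, Complex.ofReal_exp]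
    rw [pow_apply_eig _ _ _ h1 n, Complex.ofReal_pow]
  have hP : ∀ n : ℕ, ∑ j, (Real.exp (μ j) ^ n)^2 * t j = (Real.exp ((n:ℝ) * c))^2 := by
    intro n
    rw [← keynorm _ (hΛ.exp.pow n) _ (hbexp n), hfwd n]
  have hQ : ∀ n : ℕ, ∑ j, (Real.exp (-μ j) ^ n)^2 * t j = (Real.exp ((n:ℝ) * (-c)))^2 := by
    intro n
    rw [← keynorm _ ((hΛ.neg).exp.pow n) _ (hbexpneg n), hbwd n]
    congr 1
    ring_nf
  have bound : ∀ (ν : Fin n0 → ℝ) (e : ℝ),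
      (∀ n : ℕ, ∑ j, (Real.exp (ν j) ^ n)^2 * t j = (Real.exp ((n:ℝ) * e))^2) →
      ∀ (i : Fin n0) (n : ℕ), t i ≤ Real.exp ((n:ℝ) * (2 * (e - ν i))) := by
    intro ν e hsum i n
    have h1 : (Real.exp (ν i) ^ n)^2 * t i ≤ (Real.exp ((n:ℝ) * e))^2 := by
      rw [← hsum n]
      exact Finset.single_le_sum (f := fun j => (Real.exp (ν j) ^ n)^2 * t j)
        (fun j _ => by positivity) (Finset.mem_univ i)
    have e1 : (Real.exp (ν i) ^ n)^2 = Real.exp ((n:ℝ) * (2 * ν i)) := by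
      rw [← Real.exp_nat_mul, ← Real.exp_nat_mul]
      congr 1
      push_cast
      ring
    have e2 : (Real.exp ((n:ℝ) * e))^2 = Real.exp ((n:ℝ) * (2 * e)) := by
      rw [← Real.exp_nat_mul]
      congr 1
      push_cast
      ring
    rw [e1, e2] at h1
    have hpos := Real.exp_pos ((n:ℝ) * (2 * ν i))
    have h2 : t i ≤ Real.exp ((n:ℝ) * (2 * e)) / Real.exp ((n:ℝ) * (2 * ν i)) := by
      rw [le_div_iff₀ hpos]
      linarith
    rw [← Real.exp_sub] at h2
    convert h2 using 2
    ring
  have hkey : ∀ i : Fin n0, t i ≠ 0 → μ i = c := by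
    intro i hti
    by_contra hne
    have htn : 0 ≤ t i := by positivity
    rcases lt_or_gt_of_ne hne with hlt | hgt
    · exact hti (le_exp_vanish htn (show 2 * (-c - -μ i) < 0 by linarith) (bound _ _ hQ i))
    · exact hti (le_exp_vanish htn (show 2 * (c - μ i) < 0 by linarith) (bound _ _ hP i))
  -- conclude
  conv_lhs => rw [← b.sum_repr w]
  conv_rhs => rw [← b.sum_repr w]
  rw [map_sum, Finset.smul_sum]
  refine Finset.sum_congr rfl fun i _ => ?_
  by_cases hi : b.repr w i = 0
  · simp [hi]
  · have hμc : μ i = c := hkey i (by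
      intro h
      exact hi (by simpa [ht, pow_eq_zero_iff] using h))
    rw [map_smul, hb i, hμc, smul_comm]
end

section
/- For every v ∈ V with v ≠ 0, the averaged logarithmic growth rate (1/i) · log‖A_i v‖ converges as i → ∞ to d(v) := lim_{i→∞}(log‖A_{i+1}v‖ − log‖A_i v‖), which is an eigenvalue of Λ. -/
open Filter Topology

theorem exp_eigen_s3 {V : Type*} [NormedAddCommGroup V] [InnerProductSpace ℂ V] [FiniteDimensional ℂ V]
    (Λ : V →L[ℂ] V) (u : V) (r : ℝ) (h : Λ u = (r : ℂ) • u) :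
    NormedSpace.exp Λ u = ((Real.exp r : ℝ) : ℂ) • u := by
  have hpow : ∀ n : ℕ, (Λ^n) u = ((r:ℂ)^n) • u := by
    intro n
    induction n with
    | zero => simp
    | succ n ih =>
      rw [pow_succ, ContinuousLinearMap.mul_apply, h, map_smul, ih, smul_smul, pow_succ, mul_comm]
  have hsum : Summable fun n : ℕ => (Nat.factorial n : ℂ)⁻¹ • Λ ^ n := NormedSpace.expSeries_summable' Λ
  have hmap := (ContinuousLinearMap.apply ℂ V u).map_tsum hsum
  rw [NormedSpace.exp_eq_tsum (𝕂 := ℂ)]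
  simp only [ContinuousLinearMap.apply_apply] at hmap
  rw [hmap]
  have heq : ∀ n : ℕ, (Nat.factorial n : ℂ)⁻¹ • (Λ ^ n) u = ((Nat.factorial n : ℂ)⁻¹ • (r:ℂ)^n) • u := by
    intro n; rw [hpow, smul_smul]; norm_num
  calc ∑' n : ℕ, (Nat.factorial n : ℂ)⁻¹ • (Λ ^ n) u
      = ∑' n : ℕ, ((Nat.factorial n : ℂ)⁻¹ • (r:ℂ)^n) • u := tsum_congr heq
    _ = (∑' n : ℕ, (Nat.factorial n : ℂ)⁻¹ • (r:ℂ)^n) • u :=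
        Summable.tsum_smul_const (NormedSpace.expSeries_summable' (𝕂 := ℂ) (r:ℂ)) u
    _ = ((Real.exp r : ℝ) : ℂ) • u := by
        have : (∑' n : ℕ, (Nat.factorial n : ℂ)⁻¹ • (r:ℂ)^n) = NormedSpace.exp (r:ℂ) :=
          (congrFun (NormedSpace.exp_eq_tsum (𝕂 := ℂ)) ((r:ℂ))).symm
        rw [this, ← Complex.exp_eq_exp_ℂ, ← Complex.ofReal_exp]


theorem lin_rec_zero (θ : ℝ) (hθ0 : 0 ≤ θ) (hθ1 : θ < 1)
    (u v : ℕ → ℝ) (hu : ∀ m, 0 ≤ u m) (hv : Tendsto v atTop (𝓝 0))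
    (hrec : ∀ m, u (m+1) ≤ θ * u m + v m) :
    Tendsto u atTop (𝓝 0) := by
  rw [Metric.tendsto_atTop]
  intro ρ hρ
  set c := (1 - θ) * ρ / 2 with hc
  have hcpos : 0 < c := by rw [hc]; nlinarith
  obtain ⟨N, hN⟩ := (Metric.tendsto_atTop.1 hv) c hcpos
  have hvc : ∀ m ≥ N, v m < c := by
    intro m hm
    have := hN m hm
    rw [Real.dist_eq, sub_zero] at this
    exact (abs_lt.1 this).2
  -- step preserving
  have hstep : ∀ m ≥ N, u m < ρ → u (m+1) < ρ := by
    intro m hm hum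
    calc u (m+1) ≤ θ * u m + v m := hrec m
      _ < θ * ρ + c := by
          apply add_lt_add_of_le_of_lt _ (hvc m hm)
          exact mul_le_mul_of_nonneg_left hum.le hθ0
      _ ≤ ρ := by rw [hc]; nlinarith
  -- find entry point
  have hexists : ∃ m ≥ N, u m < ρ := by
    by_contra hcon
    push_neg at hcon
    have hdec : ∀ j : ℕ, u (N + j) ≤ u N - j * c := by
      intro j
      induction j with
      | zero => simp
      | succ j ih =>
        have hNj : N + j ≥ N := Nat.le_add_right N j
        have h1 : u (N + j) ≥ ρ := hcon (N + j) hNj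
        have h2 : u (N + (j+1)) ≤ θ * u (N + j) + v (N + j) := by
          have := hrec (N + j); rwa [Nat.add_assoc] at this
        have h3 : v (N + j) < c := hvc (N + j) hNj
        have h4 : θ * u (N + j) + c ≤ u (N + j) - c := by
          have : (1 - θ) * u (N + j) ≥ (1 - θ) * ρ := by
            apply mul_le_mul_of_nonneg_left h1 (by linarith)
          rw [hc] at *; nlinarith
        push_cast
        nlinarith
    obtain ⟨j, hj⟩ := exists_nat_gt ((u N + 1) / c)
    have : u (N + j) ≤ u N - j * c := hdec j
    have hjc : (j : ℝ) * c > u N + 1 := by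
      rw [div_lt_iff₀ hcpos] at hj; linarith
    have := hu (N + j)
    have hρ' : u (N + j) ≥ ρ := hcon (N + j) (Nat.le_add_right N j)
    linarith
  obtain ⟨m0, hm0N, hm0⟩ := hexists
  refine ⟨m0, fun m hm => ?_⟩
  rw [Real.dist_eq, sub_zero, abs_of_nonneg (hu m)]
  -- induction from m0
  have : ∀ j, u (m0 + j) < ρ := by
    intro j
    induction j with
    | zero => simpa using hm0
    | succ j ih =>
      have := hstep (m0 + j) (le_trans hm0N (Nat.le_add_right m0 j)) ih
      rwa [Nat.add_assoc] at this
  have := this (m - m0)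
  rwa [Nat.add_sub_cancel' hm] at this

theorem dichotomy (a b : ℝ) (hb : 0 ≤ b) (hab : b < a)
    (T R N ε : ℕ → ℝ)
    (hT : ∀ i, 0 ≤ T i) (hR : ∀ i, 0 ≤ R i) (hN : ∀ i, 0 < N i)
    (hTN : ∀ i, T i ≤ N i) (hRN : ∀ i, R i ≤ N i) (hNTR : ∀ i, N i ≤ T i + R i)
    (h1 : ∀ i, a * T i - ε i * N i ≤ T (i+1))
    (h2 : ∀ i, R (i+1) ≤ b * R i + ε i * N i)
    (hεpos : ∀ i, 0 ≤ ε i) (hε : Tendsto ε atTop (𝓝 0))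
    (hnot : ¬ Tendsto (fun i => T i / N i) atTop (𝓝 0)) :
    Tendsto (fun i => R i / N i) atTop (𝓝 0) := by
  have ha : 0 < a := lt_of_le_of_lt hb hab
  -- extract frequent lower bound
  obtain ⟨c, hc, hfreq⟩ : ∃ c > 0, ∀ I : ℕ, ∃ i ≥ I, c ≤ T i / N i := by
    rw [Metric.tendsto_atTop] at hnot
    push_neg at hnot
    obtain ⟨c, hc, h⟩ := hnot
    refine ⟨c, hc, fun I => ?_⟩
    obtain ⟨i, hi, hd⟩ := h I
    refine ⟨i, hi, ?_⟩
    rw [Real.dist_eq, sub_zero, abs_of_nonneg (div_nonneg (hT i) (hN i).le)] at hd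
    exact hd
  set Q : ℝ := 1 / c with hQ
  have hQpos : 0 < Q := by positivity
  set δ : ℝ := (a - b) / 2 with hδ
  have hδpos : 0 < δ := by rw [hδ]; linarith
  have haδ : 0 < a - δ := by rw [hδ]; linarith
  have hbδ : b < a - δ := by rw [hδ]; linarith
  set η : ℝ := δ * min 1 Q / (1 + Q) with hη
  have hηpos : 0 < η := by
    have : 0 < min 1 Q := lt_min one_pos hQpos
    positivity
  have hη1 : η * (1 + Q) ≤ δ := by
    rw [hη, div_mul_cancel₀ _ (by positivity : (1:ℝ) + Q ≠ 0)]
    nlinarith [min_le_left 1 Q, lt_min one_pos hQpos]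
  have hη2 : η * (1 + Q) ≤ δ * Q := by
    rw [hη, div_mul_cancel₀ _ (by positivity : (1:ℝ) + Q ≠ 0)]
    nlinarith [min_le_right 1 Q, lt_min one_pos hQpos]
  obtain ⟨I, hI⟩ := (Metric.tendsto_atTop.1 hε) η hηpos
  have hIε : ∀ i ≥ I, ε i ≤ η := by
    intro i hi
    have := hI i hi
    rw [Real.dist_eq, sub_zero] at this
    exact le_of_lt ((abs_lt.1 this).2)
  obtain ⟨i0, hi0I, hi0⟩ := hfreq I
  have hTi0 : c * N i0 ≤ T i0 := by
    rw [le_div_iff₀ (hN i0)] at hi0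
    linarith [hi0]
  -- invariant
  have hInv : ∀ j : ℕ, 0 < T (i0 + j) ∧ R (i0 + j) ≤ Q * T (i0 + j) := by
    intro j
    induction j with
    | zero =>
      have hTpos : 0 < T i0 := lt_of_lt_of_le (mul_pos hc (hN i0)) hTi0
      refine ⟨by simpa using hTpos, ?_⟩
      simp only [Nat.add_zero]
      have hQT : Q * T i0 = T i0 / c := by rw [hQ]; ring
      rw [hQT, le_div_iff₀ hc]
      nlinarith [hRN i0]
    | succ j ih =>
      obtain ⟨hTpos, hRQ⟩ := ih
      set m := i0 + j with hm
      have hmI : m ≥ I := le_trans hi0I (Nat.le_add_right i0 j)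
      have hεm : ε m ≤ η := hIε m hmI
      have hNle : N m ≤ (1 + Q) * T m := by
        calc N m ≤ T m + R m := hNTR m
          _ ≤ T m + Q * T m := by linarith
          _ = (1 + Q) * T m := by ring
      have hTnext : (a - δ) * T m ≤ T (m+1) := by
        have := h1 m
        have hεN : ε m * N m ≤ δ * T m := by
          calc ε m * N m ≤ η * ((1 + Q) * T m) := by
                apply mul_le_mul hεm hNle (hN m).le hηpos.le
            _ = (η * (1 + Q)) * T m := by ring
            _ ≤ δ * T m := mul_le_mul_of_nonneg_right hη1 hTpos.le
        linarith
      have hTnextpos : 0 < T (m+1) := lt_of_lt_of_le (mul_pos haδ hTpos) hTnext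
      have hRnext : R (m+1) ≤ Q * T (m+1) := by
        have := h2 m
        have hεN : ε m * N m ≤ δ * Q * T m := by
          calc ε m * N m ≤ η * ((1 + Q) * T m) := by
                apply mul_le_mul hεm hNle (hN m).le hηpos.le
            _ = (η * (1 + Q)) * T m := by ring
            _ ≤ (δ * Q) * T m := mul_le_mul_of_nonneg_right hη2 hTpos.le
        have hbR : b * R m ≤ b * Q * T m := by
          calc b * R m ≤ b * (Q * T m) := mul_le_mul_of_nonneg_left hRQ hb
            _ = b * Q * T m := by ring
        calc R (m+1) ≤ b * R m + ε m * N m := h2 m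
          _ ≤ b * Q * T m + δ * Q * T m := by linarith
          _ = Q * ((b + δ) * T m) := by ring
          _ = Q * ((a - δ) * T m) := by rw [hδ]; ring_nf
          _ ≤ Q * T (m+1) := mul_le_mul_of_nonneg_left hTnext hQpos.le
      rw [Nat.add_assoc] at hTnextpos hRnext
      exact ⟨hTnextpos, hRnext⟩
  -- contraction
  set θ : ℝ := b / (a - δ) with hθ
  have hθ0 : 0 ≤ θ := div_nonneg hb haδ.le
  have hθ1 : θ < 1 := by rw [hθ, div_lt_one haδ]; exact hbδ
  set u : ℕ → ℝ := fun j => R (i0 + j) / T (i0 + j) with hu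
  set w : ℕ → ℝ := fun j => ((1 + Q) / (a - δ)) * ε (i0 + j) with hw
  have hwz : Tendsto w atTop (𝓝 0) := by
    have : Tendsto (fun j => ε (i0 + j)) atTop (𝓝 0) := by
      have := hε.comp (tendsto_add_atTop_nat i0)
      simpa [Function.comp_def, Nat.add_comm] using this
    simpa using this.const_mul ((1 + Q) / (a - δ))
  have hu0 : ∀ j, 0 ≤ u j := fun j => div_nonneg (hR _) (hInv j).1.le
  have hurec : ∀ j, u (j+1) ≤ θ * u j + w j := by
    intro j
    obtain ⟨hTpos, hRQ⟩ := hInv j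
    set m := i0 + j with hm
    have hmI : m ≥ I := le_trans hi0I (Nat.le_add_right i0 j)
    have hNle : N m ≤ (1 + Q) * T m := by
      calc N m ≤ T m + R m := hNTR m
        _ ≤ T m + Q * T m := by linarith
        _ = (1 + Q) * T m := by ring
    have hTnext : (a - δ) * T m ≤ T (m+1) := by
      have := h1 m
      have hεN : ε m * N m ≤ δ * T m := by
        calc ε m * N m ≤ η * ((1 + Q) * T m) := by
              apply mul_le_mul (hIε m hmI) hNle (hN m).le hηpos.le
          _ = (η * (1 + Q)) * T m := by ring
          _ ≤ δ * T m := mul_le_mul_of_nonneg_right hη1 hTpos.le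
      linarith
    have hRup : R (m+1) ≤ b * R m + ε m * ((1 + Q) * T m) := by
      calc R (m+1) ≤ b * R m + ε m * N m := h2 m
        _ ≤ b * R m + ε m * ((1 + Q) * T m) :=
            (add_le_add_iff_left _).2 (mul_le_mul_of_nonneg_left hNle (hεpos m))
    have hnum0 : 0 ≤ b * R m + ε m * ((1 + Q) * T m) := by
      have := hR m; have := hεpos m; have := hTpos.le; positivity
    have key : u (j+1) ≤ (b * R m + ε m * ((1 + Q) * T m)) / ((a - δ) * T m) := by
      have : u (j+1) = R (m+1) / T (m+1) := by rw [hu, hm, Nat.add_assoc]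
      rw [this]
      exact div_le_div₀ hnum0 hRup (mul_pos haδ hTpos) hTnext
    have heq : (b * R m + ε m * ((1 + Q) * T m)) / ((a - δ) * T m)
        = θ * (R m / T m) + ((1 + Q) / (a - δ)) * ε m := by
      rw [hθ]
      field_simp
    rw [heq] at key
    exact key
  have huz : Tendsto u atTop (𝓝 0) := lin_rec_zero θ hθ0 hθ1 u w hu0 hwz hurec
  -- conclude
  have hsq : ∀ j : ℕ, R (i0 + j) / N (i0 + j) ≤ u j := by
    intro j
    exact div_le_div_of_nonneg_left (hR _) (hInv j).1 (hTN _)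
  have h0 : ∀ j : ℕ, 0 ≤ R (i0 + j) / N (i0 + j) :=
    fun j => div_nonneg (hR _) (hN _).le
  have hshift : Tendsto (fun j => R (i0 + j) / N (i0 + j)) atTop (𝓝 0) :=
    squeeze_zero h0 hsq huz
  have heqf : (fun j => R (j + i0) / N (j + i0)) = (fun j => R (i0 + j) / N (i0 + j)) := by
    funext j; rw [Nat.add_comm]
  exact (tendsto_add_atTop_iff_nat i0).1 (heqf ▸ hshift)


noncomputable def emask {n : ℕ} (S : Finset (Fin n)) (y : EuclideanSpace ℂ (Fin n)) :
    EuclideanSpace ℂ (Fin n) := WithLp.toLp 2 (fun l => if l ∈ S then y l else 0)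

noncomputable def ediag {n : ℕ} (μ : Fin n → ℝ) (y : EuclideanSpace ℂ (Fin n)) :
    EuclideanSpace ℂ (Fin n) := WithLp.toLp 2 (fun l => (Real.exp (μ l) : ℂ) * y l)

variable {n : ℕ} (S T : Finset (Fin n)) (y z : EuclideanSpace ℂ (Fin n)) (μ : Fin n → ℝ)

theorem norm_emask : ‖emask S y‖ = Real.sqrt (∑ l ∈ S, ‖y l‖^2) := by
  rw [EuclideanSpace.norm_eq]
  congr 1
  calc ∑ l : Fin n, ‖emask S y l‖^2
      = ∑ l : Fin n, (if l ∈ S then ‖y l‖^2 else 0) := by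
        apply Finset.sum_congr rfl
        intro l _
        by_cases h : l ∈ S <;> simp [emask, h]
    _ = ∑ l ∈ Finset.univ ∩ S, ‖y l‖^2 := Finset.sum_ite_mem Finset.univ S _
    _ = ∑ l ∈ S, ‖y l‖^2 := by rw [Finset.univ_inter]

theorem emask_univ : emask Finset.univ y = y := by
  ext l; simp [emask]

theorem norm_emask_mono (h : S ⊆ T) : ‖emask S y‖ ≤ ‖emask T y‖ := by
  rw [norm_emask, norm_emask]
  apply Real.sqrt_le_sqrt
  apply Finset.sum_le_sum_of_subset_of_nonneg h
  intro l _ _; positivity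

theorem norm_emask_le : ‖emask S y‖ ≤ ‖y‖ := by
  have := norm_emask_mono S Finset.univ y (Finset.subset_univ S)
  rwa [emask_univ] at this

theorem emask_add : emask S (y + z) = emask S y + emask S z := by
  ext l
  simp only [emask, PiLp.add_apply, PiLp.toLp_apply]
  by_cases h : l ∈ S <;> simp [h]

theorem emask_union (h : Disjoint S T) : emask (S ∪ T) y = emask S y + emask T y := by
  ext l
  simp only [emask, PiLp.add_apply, PiLp.toLp_apply]
  by_cases hS : l ∈ S
  · have hT : l ∉ T := Finset.disjoint_left.1 h hS
    simp [hS, hT]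
  · by_cases hT : l ∈ T <;> simp [hS, hT]

theorem sq_norm_emask_union (h : Disjoint S T) :
    ‖emask (S ∪ T) y‖^2 = ‖emask S y‖^2 + ‖emask T y‖^2 := by
  rw [norm_emask, norm_emask, norm_emask, Real.sq_sqrt (by positivity),
    Real.sq_sqrt (by positivity), Real.sq_sqrt (by positivity)]
  exact Finset.sum_union h

theorem norm_emask_ediag_ge (c : ℝ) (hc : 0 ≤ c) (h : ∀ l ∈ S, c ≤ Real.exp (μ l)) :
    c * ‖emask S y‖ ≤ ‖emask S (ediag μ y)‖ := by
  rw [norm_emask, norm_emask]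
  have key : ∀ l ∈ S, c^2 * ‖y l‖^2 ≤ ‖(ediag μ y) l‖^2 := by
    intro l hl
    have : ‖(ediag μ y) l‖ = Real.exp (μ l) * ‖y l‖ := by
      simp [ediag, norm_mul, Complex.norm_real, abs_of_pos (Real.exp_pos (μ l))]
    rw [this, mul_pow]
    apply mul_le_mul_of_nonneg_right _ (by positivity)
    exact pow_le_pow_left₀ hc (h l hl) 2
  calc c * Real.sqrt (∑ l ∈ S, ‖y l‖^2)
      = Real.sqrt (c^2 * ∑ l ∈ S, ‖y l‖^2) := by
        rw [Real.sqrt_mul (by positivity), Real.sqrt_sq hc]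
    _ = Real.sqrt (∑ l ∈ S, c^2 * ‖y l‖^2) := by rw [Finset.mul_sum]
    _ ≤ Real.sqrt (∑ l ∈ S, ‖(ediag μ y) l‖^2) :=
        Real.sqrt_le_sqrt (Finset.sum_le_sum key)

theorem norm_emask_ediag_le (c : ℝ) (h : ∀ l ∈ S, Real.exp (μ l) ≤ c) :
    ‖emask S (ediag μ y)‖ ≤ c * ‖emask S y‖ := by
  rcases S.eq_empty_or_nonempty with hS | ⟨l0, hl0⟩
  · subst hS
    simp [norm_emask]
  have hc : 0 ≤ c := le_trans (Real.exp_pos (μ l0)).le (h l0 hl0)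
  rw [norm_emask, norm_emask]
  have key : ∀ l ∈ S, ‖(ediag μ y) l‖^2 ≤ c^2 * ‖y l‖^2 := by
    intro l hl
    have : ‖(ediag μ y) l‖ = Real.exp (μ l) * ‖y l‖ := by
      simp [ediag, norm_mul, Complex.norm_real, abs_of_pos (Real.exp_pos (μ l))]
    rw [this, mul_pow]
    apply mul_le_mul_of_nonneg_right _ (by positivity)
    exact pow_le_pow_left₀ (Real.exp_pos (μ l)).le (h l hl) 2
  calc Real.sqrt (∑ l ∈ S, ‖(ediag μ y) l‖^2)
      ≤ Real.sqrt (∑ l ∈ S, c^2 * ‖y l‖^2) := Real.sqrt_le_sqrt (Finset.sum_le_sum key)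
    _ = Real.sqrt (c^2 * ∑ l ∈ S, ‖y l‖^2) := by rw [Finset.mul_sum]
    _ = c * Real.sqrt (∑ l ∈ S, ‖y l‖^2) := by
        rw [Real.sqrt_mul (by positivity), Real.sqrt_sq hc]

theorem norm_emask_pointmul_ge (g : Fin n → ℂ) (c : ℝ) (hc : 0 ≤ c) (h : ∀ l ∈ S, c ≤ ‖g l‖) :
    c * ‖emask S y‖ ≤ ‖emask S (WithLp.toLp 2 (fun l => g l * y l) : EuclideanSpace ℂ (Fin n))‖ := by
  rw [norm_emask, norm_emask]
  have key : ∀ l ∈ S, c^2 * ‖y l‖^2 ≤ ‖g l * y l‖^2 := by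
    intro l hl
    rw [norm_mul, mul_pow]
    apply mul_le_mul_of_nonneg_right _ (by positivity)
    exact pow_le_pow_left₀ hc (h l hl) 2
  calc c * Real.sqrt (∑ l ∈ S, ‖y l‖^2)
      = Real.sqrt (c^2 * ∑ l ∈ S, ‖y l‖^2) := by
        rw [Real.sqrt_mul (by positivity), Real.sqrt_sq hc]
    _ = Real.sqrt (∑ l ∈ S, c^2 * ‖y l‖^2) := by rw [Finset.mul_sum]
    _ ≤ Real.sqrt (∑ l ∈ S, ‖g l * y l‖^2) := Real.sqrt_le_sqrt (Finset.sum_le_sum key)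

theorem norm_emask_pointmul_le (g : Fin n → ℂ) (c : ℝ) (hc : 0 ≤ c) (h : ∀ l ∈ S, ‖g l‖ ≤ c) :
    ‖emask S (WithLp.toLp 2 (fun l => g l * y l) : EuclideanSpace ℂ (Fin n))‖ ≤ c * ‖emask S y‖ := by
  rw [norm_emask, norm_emask]
  have key : ∀ l ∈ S, ‖g l * y l‖^2 ≤ c^2 * ‖y l‖^2 := by
    intro l hl
    rw [norm_mul, mul_pow]
    apply mul_le_mul_of_nonneg_right _ (by positivity)
    exact pow_le_pow_left₀ (norm_nonneg _) (h l hl) 2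
  calc Real.sqrt (∑ l ∈ S, ‖g l * y l‖^2)
      ≤ Real.sqrt (∑ l ∈ S, c^2 * ‖y l‖^2) := Real.sqrt_le_sqrt (Finset.sum_le_sum key)
    _ = Real.sqrt (c^2 * ∑ l ∈ S, ‖y l‖^2) := by rw [Finset.mul_sum]
    _ = c * Real.sqrt (∑ l ∈ S, ‖y l‖^2) := by
        rw [Real.sqrt_mul (by positivity), Real.sqrt_sq hc]

theorem sum_sq_le_sq_sum {α : Type*} (F : Finset α) (f : α → ℝ) (hf : ∀ t ∈ F, 0 ≤ f t) :
    ∑ t ∈ F, (f t)^2 ≤ (∑ t ∈ F, f t)^2 := by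
  have hs : 0 ≤ ∑ t ∈ F, f t := Finset.sum_nonneg hf
  calc ∑ t ∈ F, (f t)^2 = ∑ t ∈ F, f t * f t := by
        apply Finset.sum_congr rfl; intro t _; ring
    _ ≤ ∑ t ∈ F, f t * (∑ r ∈ F, f r) := by
        apply Finset.sum_le_sum
        intro t ht
        exact mul_le_mul_of_nonneg_left (Finset.single_le_sum hf ht) (hf t ht)
    _ = (∑ t ∈ F, f t)^2 := by rw [← Finset.sum_mul]; ring

theorem core {n : ℕ} (μ : Fin n → ℝ) (x : ℕ → EuclideanSpace ℂ (Fin n))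
    (hx : ∀ i, x i ≠ 0) (ε : ℕ → ℝ) (hεpos : ∀ i, 0 ≤ ε i)
    (hε : Tendsto ε atTop (𝓝 0))
    (hrec : ∀ i, ‖x (i+1) - ediag μ (x i)‖ ≤ ε i * ‖x i‖) :
    ∃ s ∈ Set.range μ,
      Tendsto (fun i => Real.log ‖x (i+1)‖ - Real.log ‖x i‖) atTop (𝓝 s) ∧
      Tendsto (fun i : ℕ => (i:ℝ)⁻¹ * Real.log ‖x i‖) atTop (𝓝 s) := by
  classical
  have hNpos : ∀ i, 0 < ‖x i‖ := fun i => norm_pos_iff.2 (hx i)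
  have hn0 : n ≠ 0 := by
    rintro rfl
    exact hx 0 (Subsingleton.elim _ _)
  have hfne : Nonempty (Fin n) := ⟨⟨0, Nat.pos_of_ne_zero hn0⟩⟩
  set Sge : ℝ → Finset (Fin n) := fun s => Finset.univ.filter (fun l => s ≤ μ l) with hSge
  set Slt : ℝ → Finset (Fin n) := fun s => Finset.univ.filter (fun l => μ l < s) with hSlt
  set Sgt : ℝ → Finset (Fin n) := fun s => Finset.univ.filter (fun l => s < μ l) with hSgt
  set Seq : ℝ → Finset (Fin n) := fun s => Finset.univ.filter (fun l => μ l = s) with hSeq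
  set bad : ℝ → Prop :=
    fun s => ¬ Tendsto (fun i => ‖emask (Sge s) (x i)‖ / ‖x i‖) atTop (𝓝 0) with hbad
  set Vals : Finset ℝ := Finset.image μ Finset.univ with hVals
  have hVne : Vals.Nonempty := ⟨μ (Classical.arbitrary (Fin n)), by
    rw [hVals]; exact Finset.mem_image_of_mem μ (Finset.mem_univ _)⟩
  -- the minimum value is bad
  have hmin_bad : bad (Vals.min' hVne) := by
    have hSgemin : Sge (Vals.min' hVne) = Finset.univ := by
      apply Finset.eq_univ_of_forall
      intro l
      rw [hSge]
      simp only [Finset.mem_filter, Finset.mem_univ, true_and]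
      exact Vals.min'_le (μ l) (by rw [hVals]; exact Finset.mem_image_of_mem μ (Finset.mem_univ _))
    rw [hbad]
    intro hcon
    have heq1 : (fun i => ‖emask (Sge (Vals.min' hVne)) (x i)‖ / ‖x i‖) = fun _ => (1:ℝ) := by
      funext i
      rw [hSgemin, emask_univ, div_self (hNpos i).ne']
    rw [heq1] at hcon
    exact one_ne_zero (tendsto_nhds_unique tendsto_const_nhds hcon)
  -- pick the largest bad value
  have hBne : (Vals.filter bad).Nonempty :=
    ⟨Vals.min' hVne, Finset.mem_filter.2 ⟨Vals.min'_mem hVne, hmin_bad⟩⟩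
  set s : ℝ := (Vals.filter bad).max' hBne with hs
  have hsmem : s ∈ Vals ∧ bad s := Finset.mem_filter.1 ((Vals.filter bad).max'_mem hBne)
  have hsmax : ∀ t ∈ Vals, bad t → t ≤ s := by
    intro t ht hbt
    exact (Vals.filter bad).le_max' t (Finset.mem_filter.2 ⟨ht, hbt⟩)
  have hsrange : s ∈ Set.range μ := by
    obtain ⟨l, _, hl⟩ := Finset.mem_image.1 (hVals ▸ hsmem.1)
    exact ⟨l, hl⟩
  -- Part A : mass strictly above s is negligible
  have habove : Tendsto (fun i => ‖emask (Sgt s) (x i)‖ / ‖x i‖) atTop (𝓝 0) := by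
    set F : Finset ℝ := Vals.filter (fun t => s < t) with hF
    have hgood : ∀ t ∈ F, Tendsto (fun i => ‖emask (Sge t) (x i)‖ / ‖x i‖) atTop (𝓝 0) := by
      intro t ht
      obtain ⟨htV, hts⟩ := Finset.mem_filter.1 ht
      by_contra hcon
      exact absurd (hsmax t htV hcon) (not_le.2 hts)
    have hcover : Sgt s = F.biUnion (fun t => Seq t) := by
      ext l
      constructor
      · intro hl
        have hμ : s < μ l := by
          rw [hSgt] at hl
          simpa using (Finset.mem_filter.1 hl).2
        have htF : μ l ∈ F := by
          rw [hF]
          refine Finset.mem_filter.2 ⟨?_, hμ⟩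
          rw [hVals]
          exact Finset.mem_image_of_mem μ (Finset.mem_univ l)
        refine Finset.mem_biUnion.2 ⟨μ l, htF, ?_⟩
        rw [hSeq]
        exact Finset.mem_filter.2 ⟨Finset.mem_univ l, rfl⟩
      · intro hl
        obtain ⟨t, htF, hlt⟩ := Finset.mem_biUnion.1 hl
        rw [hSeq] at hlt
        rw [hF] at htF
        have h1 : μ l = t := (Finset.mem_filter.1 hlt).2
        have h2 : s < t := (Finset.mem_filter.1 htF).2
        rw [hSgt]
        refine Finset.mem_filter.2 ⟨Finset.mem_univ l, ?_⟩
        rw [h1]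
        exact h2
    have hdisj : (F : Set ℝ).PairwiseDisjoint (fun t => Seq t) := by
      intro t1 _ t2 _ hne
      apply Finset.disjoint_left.2
      intro l hl1 hl2
      rw [hSeq] at hl1 hl2
      simp only [Finset.mem_filter] at hl1 hl2
      exact hne (hl1.2 ▸ hl2.2)
    have hbound : ∀ i, ‖emask (Sgt s) (x i)‖ ≤ ∑ t ∈ F, ‖emask (Sge t) (x i)‖ := by
      intro i
      have h1 : ‖emask (Sgt s) (x i)‖^2 = ∑ t ∈ F, ∑ l ∈ Seq t, ‖x i l‖^2 := by
        rw [norm_emask, Real.sq_sqrt (by positivity), hcover]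
        exact Finset.sum_biUnion hdisj
      have h2 : ∀ t ∈ F, ∑ l ∈ Seq t, ‖x i l‖^2 ≤ ‖emask (Sge t) (x i)‖^2 := by
        intro t _
        rw [norm_emask, Real.sq_sqrt (by positivity)]
        apply Finset.sum_le_sum_of_subset_of_nonneg
        · intro l hl
          rw [hSeq] at hl; rw [hSge]
          simp only [Finset.mem_filter, Finset.mem_univ, true_and] at hl ⊢
          exact le_of_eq hl.symm
        · intro l _ _; positivity
      have h3 : ‖emask (Sgt s) (x i)‖^2 ≤ (∑ t ∈ F, ‖emask (Sge t) (x i)‖)^2 := by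
        calc ‖emask (Sgt s) (x i)‖^2 = ∑ t ∈ F, ∑ l ∈ Seq t, ‖x i l‖^2 := h1
          _ ≤ ∑ t ∈ F, ‖emask (Sge t) (x i)‖^2 := Finset.sum_le_sum h2
          _ ≤ (∑ t ∈ F, ‖emask (Sge t) (x i)‖)^2 :=
              sum_sq_le_sq_sum F _ (fun t _ => norm_nonneg _)
      have h4 : 0 ≤ ∑ t ∈ F, ‖emask (Sge t) (x i)‖ :=
        Finset.sum_nonneg fun t _ => norm_nonneg _
      nlinarith [norm_nonneg (emask (Sgt s) (x i))]
    have hsum0 : Tendsto (fun i => ∑ t ∈ F, ‖emask (Sge t) (x i)‖ / ‖x i‖) atTop (𝓝 0) := by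
      have := tendsto_finset_sum F (fun t ht => hgood t ht)
      simpa using this
    apply squeeze_zero (fun i => div_nonneg (norm_nonneg _) (hNpos i).le) _ hsum0
    intro i
    rw [← Finset.sum_div]
    exact (div_le_div_iff_of_pos_right (hNpos i)).2 (hbound i)
  -- Part B : mass strictly below s is negligible
  have hsplit : ∀ i, x i = emask (Sge s) (x i) + emask (Slt s) (x i) := by
    intro i
    have hdis : Disjoint (Sge s) (Slt s) := by
      rw [Finset.disjoint_left]
      intro l hl1 hl2
      rw [hSge] at hl1; rw [hSlt] at hl2
      have h1 := (Finset.mem_filter.1 hl1).2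
      have h2 := (Finset.mem_filter.1 hl2).2
      linarith
    have hun : Sge s ∪ Slt s = Finset.univ := by
      apply Finset.eq_univ_of_forall
      intro l
      rcases le_or_gt s (μ l) with h | h
      · exact Finset.mem_union_left _ (by rw [hSge]; exact Finset.mem_filter.2 ⟨Finset.mem_univ l, h⟩)
      · exact Finset.mem_union_right _ (by rw [hSlt]; exact Finset.mem_filter.2 ⟨Finset.mem_univ l, h⟩)
    conv_lhs => rw [← emask_univ (x i), ← hun]
    exact emask_union _ _ _ hdis
  have hNTR : ∀ i, ‖x i‖ ≤ ‖emask (Sge s) (x i)‖ + ‖emask (Slt s) (x i)‖ := by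
    intro i
    conv_lhs => rw [hsplit i]
    exact norm_add_le _ _
  -- recurrence inequalities for masked norms
  have hup : ∀ (i : ℕ) (S : Finset (Fin n)) (c : ℝ), (∀ l ∈ S, Real.exp (μ l) ≤ c) →
      ‖emask S (x (i+1))‖ ≤ c * ‖emask S (x i)‖ + ε i * ‖x i‖ := by
    intro i S c hc
    have hx1 : x (i+1) = ediag μ (x i) + (x (i+1) - ediag μ (x i)) := by abel
    have heq : emask S (x (i+1)) =
        emask S (ediag μ (x i)) + emask S (x (i+1) - ediag μ (x i)) := by
      conv_lhs => rw [hx1]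
      exact emask_add _ _ _
    calc ‖emask S (x (i+1))‖
        ≤ ‖emask S (ediag μ (x i))‖ + ‖emask S (x (i+1) - ediag μ (x i))‖ := by
          rw [heq]; exact norm_add_le _ _
      _ ≤ c * ‖emask S (x i)‖ + ε i * ‖x i‖ := by
          apply add_le_add (norm_emask_ediag_le S (x i) μ c hc)
          exact le_trans (norm_emask_le S _) (hrec i)
  have hdown : ∀ (i : ℕ) (S : Finset (Fin n)) (c : ℝ), 0 ≤ c → (∀ l ∈ S, c ≤ Real.exp (μ l)) →
      c * ‖emask S (x i)‖ - ε i * ‖x i‖ ≤ ‖emask S (x (i+1))‖ := by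
    intro i S c hc0 hc
    have hx1 : x (i+1) = ediag μ (x i) + (x (i+1) - ediag μ (x i)) := by abel
    have heq : emask S (x (i+1)) =
        emask S (ediag μ (x i)) + emask S (x (i+1) - ediag μ (x i)) := by
      conv_lhs => rw [hx1]
      exact emask_add _ _ _
    have htri : ‖emask S (ediag μ (x i))‖ ≤
        ‖emask S (x (i+1))‖ + ‖emask S (x (i+1) - ediag μ (x i))‖ := by
      have h2 : emask S (ediag μ (x i)) =
          emask S (x (i+1)) - emask S (x (i+1) - ediag μ (x i)) := by
        rw [heq]; abel
      rw [h2]; exact norm_sub_le _ _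
    have h3 : c * ‖emask S (x i)‖ ≤ ‖emask S (ediag μ (x i))‖ :=
      norm_emask_ediag_ge S (x i) μ c hc0 hc
    have h4 : ‖emask S (x (i+1) - ediag μ (x i))‖ ≤ ε i * ‖x i‖ :=
      le_trans (norm_emask_le S _) (hrec i)
    linarith
  have hbelow : Tendsto (fun i => ‖emask (Slt s) (x i)‖ / ‖x i‖) atTop (𝓝 0) := by
    rcases (Slt s).eq_empty_or_nonempty with hemp | hne2
    · have hz : ∀ i, ‖emask (Slt s) (x i)‖ = 0 := by
        intro i; rw [hemp, norm_emask]; simp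
      have : (fun i => ‖emask (Slt s) (x i)‖ / ‖x i‖) = fun _ => (0:ℝ) := by
        funext i; rw [hz i, zero_div]
      rw [this]
      exact tendsto_const_nhds
    · set b : ℝ := ((Slt s).image μ).max' (hne2.image μ) with hbdef
      have hbmem : b ∈ (Slt s).image μ := Finset.max'_mem _ _
      obtain ⟨l0, hl0, hl0b⟩ := Finset.mem_image.1 hbmem
      have hbs : b < s := by
        rw [← hl0b]
        rw [hSlt] at hl0
        exact (Finset.mem_filter.1 hl0).2
      have hble : ∀ l ∈ Slt s, μ l ≤ b :=
        fun l hl => Finset.le_max' _ _ (Finset.mem_image_of_mem μ hl)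
      apply dichotomy (Real.exp s) (Real.exp b) (Real.exp_pos b).le (Real.exp_lt_exp.2 hbs)
        (fun i => ‖emask (Sge s) (x i)‖) (fun i => ‖emask (Slt s) (x i)‖) (fun i => ‖x i‖) ε
        (fun i => norm_nonneg _) (fun i => norm_nonneg _) hNpos
        (fun i => norm_emask_le _ _) (fun i => norm_emask_le _ _) hNTR
        (fun i => hdown i (Sge s) (Real.exp s) (Real.exp_pos s).le
          (fun l hl => Real.exp_le_exp.2 (by rw [hSge] at hl; exact (Finset.mem_filter.1 hl).2)))
        (fun i => hup i (Slt s) (Real.exp b)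
          (fun l hl => Real.exp_le_exp.2 (hble l hl)))
        hεpos hε hsmem.2
  -- Part C : mass away from the eigenvalue s is negligible
  set neqS : Finset (Fin n) := Finset.univ.filter (fun l => μ l ≠ s) with hneqS
  have hneqsplit : neqS = Sgt s ∪ Slt s := by
    ext l
    rw [hneqS, hSgt, hSlt, Finset.mem_union]
    simp only [Finset.mem_filter, Finset.mem_univ, true_and]
    constructor
    · intro h; rcases h.lt_or_gt with h' | h'
      · exact Or.inr h'
      · exact Or.inl h'
    · intro h; rcases h with h' | h'
      · exact ne_of_gt h'
      · exact ne_of_lt h'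
  have hdisj2 : Disjoint (Sgt s) (Slt s) := by
    rw [Finset.disjoint_left]
    intro l hl1 hl2
    rw [hSgt] at hl1; rw [hSlt] at hl2
    have h1 := (Finset.mem_filter.1 hl1).2
    have h2 := (Finset.mem_filter.1 hl2).2
    linarith
  have hqz : Tendsto (fun i => ‖emask neqS (x i)‖ / ‖x i‖) atTop (𝓝 0) := by
    have hb : ∀ i, ‖emask neqS (x i)‖ / ‖x i‖ ≤
        ‖emask (Sgt s) (x i)‖ / ‖x i‖ + ‖emask (Slt s) (x i)‖ / ‖x i‖ := by
      intro i
      rw [← add_div]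
      apply (div_le_div_iff_of_pos_right (hNpos i)).2
      rw [hneqsplit, emask_union _ _ _ hdisj2]
      exact norm_add_le _ _
    have hlim := habove.add hbelow
    rw [add_zero] at hlim
    exact squeeze_zero (fun i => div_nonneg (norm_nonneg _) (hNpos i).le) hb hlim
  -- Part D : the norm ratio converges to exp s
  set es : ℝ := Real.exp s with hes
  set M : ℝ := Real.exp ((Finset.univ.image μ).max'
    (Finset.Nonempty.image ⟨Classical.arbitrary (Fin n), Finset.mem_univ _⟩ μ)) + es with hM
  have hMpos : 0 < M := by
    rw [hM]; positivity
  have hcoefb : ∀ l : Fin n, ‖((Real.exp (μ l) - es : ℝ) : ℂ)‖ ≤ M := by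
    intro l
    rw [Complex.norm_real, Real.norm_eq_abs, hM]
    have h1 : Real.exp (μ l) ≤ Real.exp ((Finset.univ.image μ).max' _) :=
      Real.exp_le_exp.2 (Finset.le_max' _ _ (Finset.mem_image_of_mem μ (Finset.mem_univ l)))
    have h2 : 0 < Real.exp (μ l) := Real.exp_pos _
    have h3 : 0 < es := Real.exp_pos s
    rw [abs_le]
    constructor <;> nlinarith
  have hkey : ∀ i, |‖x (i+1)‖ - es * ‖x i‖| ≤ ε i * ‖x i‖ + M * ‖emask neqS (x i)‖ := by
    intro i
    set z : EuclideanSpace ℂ (Fin n) :=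
      WithLp.toLp 2 (fun l => ((Real.exp (μ l) - es : ℝ) : ℂ) * (x i l)) with hz
    have hzeq : ediag μ (x i) - (es : ℂ) • x i = z := by
      ext l
      simp only [hz, ediag, PiLp.sub_apply, PiLp.smul_apply, smul_eq_mul, PiLp.toLp_apply]
      push_cast
      ring
    have hzmask : emask neqS z = z := by
      ext l
      rw [emask]
      by_cases h : l ∈ neqS
      · simp [h]
      · simp only [h, if_false, PiLp.toLp_apply]
        rw [hneqS] at h
        simp only [Finset.mem_filter, Finset.mem_univ, true_and, not_not] at h
        have : ((Real.exp (μ l) - es : ℝ) : ℂ) = 0 := by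
          rw [h, hes]; simp
        simp only [hz, this, zero_mul, PiLp.toLp_apply]
    have hznorm : ‖z‖ ≤ M * ‖emask neqS (x i)‖ := by
      rw [← hzmask]
      exact norm_emask_pointmul_le neqS (x i) _ M hMpos.le (fun l _ => hcoefb l)
    have hdecomp : x (i+1) - (es : ℂ) • x i = (x (i+1) - ediag μ (x i)) + z := by
      rw [← hzeq]; abel
    have htri : |‖x (i+1)‖ - ‖(es : ℂ) • x i‖| ≤ ‖x (i+1) - (es : ℂ) • x i‖ :=
      abs_norm_sub_norm_le _ _
    have hsm : ‖(es : ℂ) • x i‖ = es * ‖x i‖ := by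
      rw [norm_smul, Complex.norm_real, Real.norm_eq_abs, abs_of_pos (Real.exp_pos s)]
    rw [hsm] at htri
    calc |‖x (i+1)‖ - es * ‖x i‖| ≤ ‖x (i+1) - (es : ℂ) • x i‖ := htri
      _ ≤ ‖x (i+1) - ediag μ (x i)‖ + ‖z‖ := by rw [hdecomp]; exact norm_add_le _ _
      _ ≤ ε i * ‖x i‖ + M * ‖emask neqS (x i)‖ := add_le_add (hrec i) hznorm
  have hratio : Tendsto (fun i => ‖x (i+1)‖ / ‖x i‖) atTop (𝓝 es) := by
    rw [tendsto_iff_norm_sub_tendsto_zero]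
    have hb : ∀ i, ‖‖x (i+1)‖ / ‖x i‖ - es‖ ≤ ε i + M * (‖emask neqS (x i)‖ / ‖x i‖) := by
      intro i
      rw [Real.norm_eq_abs]
      have h1 : |‖x (i+1)‖ / ‖x i‖ - es| = |‖x (i+1)‖ - es * ‖x i‖| / ‖x i‖ := by
        rw [eq_div_iff (hNpos i).ne']
        nth_rewrite 2 [← abs_of_pos (hNpos i)]
        rw [← abs_mul]
        congr 1
        rw [sub_mul, div_mul_cancel₀ _ (hNpos i).ne']
      rw [h1, div_le_iff₀ (hNpos i)]
      calc |‖x (i+1)‖ - es * ‖x i‖| ≤ ε i * ‖x i‖ + M * ‖emask neqS (x i)‖ := hkey i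
        _ = (ε i + M * (‖emask neqS (x i)‖ / ‖x i‖)) * ‖x i‖ := by
            have hni : ‖x i‖ ≠ 0 := (hNpos i).ne'
            field_simp
    have hlim : Tendsto (fun i => ε i + M * (‖emask neqS (x i)‖ / ‖x i‖)) atTop (𝓝 0) := by
      have := hε.add (hqz.const_mul M)
      simpa using this
    exact squeeze_zero (fun i => norm_nonneg _) hb hlim
  -- Part E : logarithmic increments converge
  have hlog : Tendsto (fun i => Real.log ‖x (i+1)‖ - Real.log ‖x i‖) atTop (𝓝 s) := by
    have heq : (fun i => Real.log ‖x (i+1)‖ - Real.log ‖x i‖)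
        = fun i => Real.log (‖x (i+1)‖ / ‖x i‖) := by
      funext i
      rw [Real.log_div (hNpos (i+1)).ne' (hNpos i).ne']
    rw [heq]
    have := hratio.log (Real.exp_pos s).ne'
    rwa [hes, Real.log_exp] at this
  -- Part F : Cesàro average
  refine ⟨s, hsrange, hlog, ?_⟩
  have hces := hlog.cesaro
  have hsum : ∀ m : ℕ, ∑ i ∈ Finset.range m, (Real.log ‖x (i+1)‖ - Real.log ‖x i‖)
      = Real.log ‖x m‖ - Real.log ‖x 0‖ := fun m => Finset.sum_range_sub (fun j => Real.log ‖x j‖) m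
  have hces2 : Tendsto (fun m : ℕ => (m:ℝ)⁻¹ * (Real.log ‖x m‖ - Real.log ‖x 0‖)) atTop (𝓝 s) := by
    have heq2 : (fun m : ℕ => (m:ℝ)⁻¹ * (Real.log ‖x m‖ - Real.log ‖x 0‖))
        = fun m : ℕ => (m:ℝ)⁻¹ • ∑ i ∈ Finset.range m, (Real.log ‖x (i+1)‖ - Real.log ‖x i‖) := by
      funext m
      rw [hsum m, smul_eq_mul]
    rw [heq2]
    exact hces
  have hzero : Tendsto (fun m : ℕ => (m:ℝ)⁻¹ * Real.log ‖x 0‖) atTop (𝓝 0) := by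
    have h1 : Tendsto (fun m : ℕ => (m:ℝ)⁻¹) atTop (𝓝 0) :=
      tendsto_inv_atTop_zero.comp tendsto_natCast_atTop_atTop
    simpa using h1.mul_const (Real.log ‖x 0‖)
  have := hces2.add hzero
  rw [add_zero] at this
  have heq3 : (fun m : ℕ => (m:ℝ)⁻¹ * (Real.log ‖x m‖ - Real.log ‖x 0‖)
      + (m:ℝ)⁻¹ * Real.log ‖x 0‖) = fun m : ℕ => (m:ℝ)⁻¹ * Real.log ‖x m‖ := by
    funext m
    ring
  rwa [heq3] at this

/-- With `Λ`, `d`, `A` as in the setup, for every `v ≠ 0` the averaged logarithmic growth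
rate `(1/i) · log ‖A i v‖` converges to `d(v) = lim (log ‖A (i+1) v‖ - log ‖A i v‖)`,
which is an eigenvalue of `Λ`. -/
theorem stmt_3 {V : Type*} [NormedAddCommGroup V] [InnerProductSpace ℂ V]
    [FiniteDimensional ℂ V]
    (Λ : V →L[ℂ] V) (hΛ : IsSelfAdjoint Λ)
    (k : ℕ) (d : Fin k → ℝ) (hd : StrictAnti d)
    (heig : ∀ μ : ℂ, Module.End.HasEigenvalue (Λ : V →ₗ[ℂ] V) μ ↔ ∃ j, μ = (d j : ℂ))
    (A : ℕ → (V ≃L[ℂ] V))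
    (hA : Tendsto (fun i => ((A (i+1) : V →L[ℂ] V).comp ((A i).symm : V →L[ℂ] V)))
      atTop (𝓝 (NormedSpace.exp Λ)))
    (v : V) (hv : v ≠ 0) :
    ∃ c : ℝ, (∃ j : Fin k, c = d j) ∧
      Tendsto (fun i => Real.log ‖A (i+1) v‖ - Real.log ‖A i v‖) atTop (𝓝 c) ∧
      Tendsto (fun i : ℕ => (i : ℝ)⁻¹ * Real.log ‖A i v‖) atTop (𝓝 c) := by
  classical
  have hsym : (Λ : V →ₗ[ℂ] V).IsSymmetric :=
    ContinuousLinearMap.isSelfAdjoint_iff_isSymmetric.mp hΛ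
  have hrank : Module.finrank ℂ V = Module.finrank ℂ V := rfl
  set n := Module.finrank ℂ V with hn
  set b := hsym.eigenvectorBasis hrank with hb
  set μ := hsym.eigenvalues hrank with hμ
  have heigen : ∀ l, Λ (b l) = (μ l : ℂ) • b l := fun l => hsym.apply_eigenvectorBasis hrank l
  have hexp : ∀ l, NormedSpace.exp Λ (b l) = ((Real.exp (μ l) : ℝ) : ℂ) • b l :=
    fun l => exp_eigen_s3 Λ (b l) (μ l) (heigen l)
  -- repr of exp Λ acts diagonally
  have hEsa : IsSelfAdjoint (NormedSpace.exp Λ) := IsSelfAdjoint.exp hΛ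
  have hsymE : LinearMap.IsSymmetric ((NormedSpace.exp Λ : V →L[ℂ] V) : V →ₗ[ℂ] V) :=
    ContinuousLinearMap.isSelfAdjoint_iff_isSymmetric.mp hEsa
  have hrepr : ∀ (w : V), b.repr (NormedSpace.exp Λ w) = ediag μ (b.repr w) := by
    intro w
    ext l
    have h1 : b.repr (NormedSpace.exp Λ w) l = inner ℂ (b l) (NormedSpace.exp Λ w) :=
      b.repr_apply_apply _ l
    have h2 : (inner ℂ (NormedSpace.exp Λ (b l)) w : ℂ) = inner ℂ (b l) (NormedSpace.exp Λ w) :=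
      hsymE (b l) w
    have h3 : (inner ℂ (NormedSpace.exp Λ (b l)) w : ℂ)
        = (Real.exp (μ l) : ℂ) * inner ℂ (b l) w := by
      rw [hexp l, inner_smul_left, Complex.conj_ofReal]
    have h4 : (inner ℂ (b l) w : ℂ) = b.repr w l := (b.repr_apply_apply w l).symm
    rw [h1, ← h2, h3, h4]
    rfl
  set x : ℕ → EuclideanSpace ℂ (Fin n) := fun i => b.repr (A i v) with hxdef
  have hxnorm : ∀ i, ‖x i‖ = ‖A i v‖ := fun i => b.repr.norm_map (A i v)
  have hx : ∀ i, x i ≠ 0 := by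
    intro i h
    have h1 : A i v ≠ 0 := fun h0 => hv (((A i).map_eq_zero_iff).1 h0)
    exact h1 (b.repr.map_eq_zero_iff.1 h)
  set ε : ℕ → ℝ := fun i =>
    ‖((A (i+1) : V →L[ℂ] V).comp ((A i).symm : V →L[ℂ] V)) - NormedSpace.exp Λ‖ with hεdef
  have hεpos : ∀ i, 0 ≤ ε i := fun i => norm_nonneg _
  have hε : Tendsto ε atTop (𝓝 0) := tendsto_iff_norm_sub_tendsto_zero.mp hA
  have hrec : ∀ i, ‖x (i+1) - ediag μ (x i)‖ ≤ ε i * ‖x i‖ := by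
    intro i
    have hBw : ((A (i+1) : V →L[ℂ] V).comp ((A i).symm : V →L[ℂ] V)) (A i v) = A (i+1) v := by
      simp
    have heq : x (i+1) - ediag μ (x i) =
        b.repr (((((A (i+1) : V →L[ℂ] V).comp ((A i).symm : V →L[ℂ] V))
          - NormedSpace.exp Λ)) (A i v)) := by
      rw [ContinuousLinearMap.sub_apply, map_sub, hBw, hrepr]
    rw [heq, b.repr.norm_map]
    calc ‖((((A (i+1) : V →L[ℂ] V).comp ((A i).symm : V →L[ℂ] V))
          - NormedSpace.exp Λ)) (A i v)‖
        ≤ ε i * ‖A i v‖ := ContinuousLinearMap.le_opNorm _ _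
      _ = ε i * ‖x i‖ := by rw [hxnorm]
  obtain ⟨c, hcrange, h1, h2⟩ := core μ x hx ε hεpos hε hrec
  refine ⟨c, ?_, ?_, ?_⟩
  · obtain ⟨l, hl⟩ := hcrange
    have hev : Module.End.HasEigenvalue (Λ : V →ₗ[ℂ] V) ((μ l : ℝ) : ℂ) :=
      Module.End.hasEigenvalue_of_hasEigenvector (hsym.hasEigenvector_eigenvectorBasis hrank l)
    obtain ⟨j, hj⟩ := (heig _).1 hev
    refine ⟨j, ?_⟩
    have : μ l = d j := by exact_mod_cast hj
    rw [← hl, this]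
  · have hfun : (fun i => Real.log ‖A (i+1) v‖ - Real.log ‖A i v‖)
        = fun i => Real.log ‖x (i+1)‖ - Real.log ‖x i‖ := by
      funext i; rw [hxnorm, hxnorm]
    rw [hfun]
    exact h1
  · have hfun : (fun i : ℕ => (i : ℝ)⁻¹ * Real.log ‖A i v‖)
        = fun i : ℕ => (i : ℝ)⁻¹ * Real.log ‖x i‖ := by
      funext i; rw [hxnorm]
    rw [hfun]
    exact h2
end

section
/- Let V be a finite-dimensional complex inner product space, v₀ ∈ V with v₀ ≠ 0, let 𝔭 be a complex linear subspace of the endomorphisms End_ℂ(V), and let W ⊆ V be a complex linear subspace. Assume the evaluation map 𝔭 → V, X ↦ X v₀, is injective and that V = ℂv₀ ⊕ 𝔭v₀ ⊕ W, where 𝔭v₀ = {X v₀ : X ∈ 𝔭}. Then for every ε > 0 there exists δ > 0 such that for every v ∈ V with ‖v − v₀‖ < δ, there exists X ∈ 𝔭 with ‖X‖ < ε and exp(X) v ∈ ℂv₀ ⊕ W. -/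
open Filter Topology

set_option maxHeartbeats 1000000
set_option synthInstance.maxHeartbeats 400000

/-- Analytic content of the Luna-slice Lemma 3.1: if `V = ℂ v₀ ⊕ 𝔭 v₀ ⊕ W` with the
evaluation `X ↦ X v₀` injective on `𝔭`, then every `v` close enough to `v₀` can be moved
into `ℂ v₀ ⊕ W` by `exp X` for some small `X ∈ 𝔭`. -/
theorem stmt_6 {V : Type*} [NormedAddCommGroup V] [InnerProductSpace ℂ V]
    [FiniteDimensional ℂ V]
    (v₀ : V) (hv₀ : v₀ ≠ 0)
    (𝔭 : Submodule ℂ (V →L[ℂ] V)) (W : Submodule ℂ V)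
    (hinj : ∀ X ∈ 𝔭, X v₀ = 0 → X = 0)
    (hdecomp : ∀ v : V, ∃! t : ℂ × 𝔭 × W,
      v = t.1 • v₀ + (t.2.1 : V →L[ℂ] V) v₀ + (t.2.2 : V)) :
    ∀ ε > 0, ∃ δ > 0, ∀ v : V, ‖v - v₀‖ < δ →
      ∃ X ∈ 𝔭, ‖X‖ < ε ∧ (NormedSpace.exp X) v ∈ (ℂ ∙ v₀) ⊔ W := by
  classical
  -- the linear decomposition map
  set ℓ : (ℂ × 𝔭 × W) →ₗ[ℂ] V :=
    { toFun := fun t => t.1 • v₀ + (t.2.1 : V →L[ℂ] V) v₀ + (t.2.2 : V)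
      map_add' := by
        intro a b
        simp only [Prod.fst_add, Prod.snd_add, Submodule.coe_add,
          ContinuousLinearMap.add_apply, add_smul]
        abel
      map_smul' := by
        intro c a
        simp only [Prod.smul_fst, Prod.smul_snd, Submodule.coe_smul,
          ContinuousLinearMap.smul_apply, smul_smul, RingHom.id_apply, smul_add]
        simp [mul_smul] } with hℓdef
  have hℓ : ∀ a : ℂ × 𝔭 × W, ℓ a = a.1 • v₀ + (a.2.1 : V →L[ℂ] V) v₀ + (a.2.2 : V) :=
    fun a => rfl
  have hbij : Function.Bijective ℓ := by
    constructor
    · intro a b hab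
      obtain ⟨t, _, huniq⟩ := hdecomp (ℓ a)
      have h1 := huniq a (hℓ a)
      have h2 := huniq b (hab.trans (hℓ b))
      rw [h1, h2]
    · intro v
      obtain ⟨t, ht, _⟩ := hdecomp v
      exact ⟨t, by rw [hℓ]; exact ht.symm⟩
  set e : (ℂ × 𝔭 × W) ≃L[ℂ] V :=
    (LinearEquiv.ofBijective ℓ hbij).toContinuousLinearEquiv with hedef
  have he : ∀ a : ℂ × 𝔭 × W, e a = ℓ a := fun a => rfl
  -- the nonlinear map
  set Φ : (ℂ × 𝔭 × W) → V :=
    fun p => NormedSpace.exp (p.2.1 : V →L[ℂ] V) (p.1 • v₀ + (p.2.2 : V)) with hΦdef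
  set p₀ : ℂ × 𝔭 × W := ((1 : ℂ), (0 : 𝔭), (0 : W)) with hp₀def
  have hΦp₀ : Φ p₀ = v₀ := by
    simp [hΦdef, hp₀def, NormedSpace.exp_zero]
  -- the derivative pieces
  set A : (ℂ × 𝔭 × W) →L[ℂ] (V →L[ℂ] V) :=
    𝔭.subtypeL.comp ((ContinuousLinearMap.fst ℂ 𝔭 W).comp
      (ContinuousLinearMap.snd ℂ ℂ (𝔭 × W))) with hAdef
  set B : (ℂ × 𝔭 × W) →L[ℂ] V :=
    ((ContinuousLinearMap.fst ℂ ℂ (𝔭 × W)).smulRight v₀) +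
      (W.subtypeL.comp ((ContinuousLinearMap.snd ℂ 𝔭 W).comp
        (ContinuousLinearMap.snd ℂ ℂ (𝔭 × W)))) with hBdef
  have hAapp : ∀ p : ℂ × 𝔭 × W, A p = (p.2.1 : V →L[ℂ] V) := fun _ => rfl
  have hBapp : ∀ p : ℂ × 𝔭 × W, B p = p.1 • v₀ + (p.2.2 : V) := by
    intro p
    simp [hBdef]
  have hA : HasStrictFDerivAt (fun p : ℂ × 𝔭 × W => (p.2.1 : V →L[ℂ] V)) A p₀ :=
    A.hasStrictFDerivAt
  have hexp : HasStrictFDerivAt (NormedSpace.exp)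
      (1 : (V →L[ℂ] V) →L[ℂ] (V →L[ℂ] V)) ((fun p : ℂ × 𝔭 × W => (p.2.1 : V →L[ℂ] V)) p₀) := by
    have h0 : ((fun p : ℂ × 𝔭 × W => (p.2.1 : V →L[ℂ] V)) p₀) = 0 := by simp [hp₀def]
    rw [h0]
    exact hasStrictFDerivAt_exp_zero
  have hf₁ : HasStrictFDerivAt (fun p : ℂ × 𝔭 × W => NormedSpace.exp (p.2.1 : V →L[ℂ] V))
      ((1 : (V →L[ℂ] V) →L[ℂ] (V →L[ℂ] V)).comp A) p₀ :=
      HasStrictFDerivAt.comp (f := fun p : ℂ × 𝔭 × W => (p.2.1 : V →L[ℂ] V)) p₀ hexp hA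
  have hf₂ : HasStrictFDerivAt (fun p : ℂ × 𝔭 × W => p.1 • v₀ + (p.2.2 : V)) B p₀ := by
    have := B.hasStrictFDerivAt (x := p₀)
    apply this.congr_of_eventuallyEq
    filter_upwards with p using (hBapp p).symm
  have hbil := (isBoundedBilinearMap_apply (𝕜 := ℂ) (E := V) (F := V)).hasStrictFDerivAt
    ((fun p : ℂ × 𝔭 × W => (NormedSpace.exp (p.2.1 : V →L[ℂ] V), p.1 • v₀ + (p.2.2 : V))) p₀)
  have hΦ' : HasStrictFDerivAt Φ
      (((isBoundedBilinearMap_apply (𝕜 := ℂ) (E := V) (F := V)).deriv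
        (NormedSpace.exp ((p₀.2.1 : V →L[ℂ] V)), p₀.1 • v₀ + (p₀.2.2 : V))).comp
        (((1 : (V →L[ℂ] V) →L[ℂ] (V →L[ℂ] V)).comp A).prod B)) p₀ :=
    by have t2 := HasStrictFDerivAt.prodMk (𝕜 := ℂ) (E := ℂ × 𝔭 × W) (F := V →L[ℂ] V) (G := V) hf₁ hf₂; have h := HasStrictFDerivAt.comp (𝕜 := ℂ) (E := ℂ × 𝔭 × W) (F := (V →L[ℂ] V) × V) (G := V) p₀ hbil t2; exact h
  have key : (((isBoundedBilinearMap_apply (𝕜 := ℂ) (E := V) (F := V)).deriv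
        (NormedSpace.exp ((p₀.2.1 : V →L[ℂ] V)), p₀.1 • v₀ + (p₀.2.2 : V))).comp
        (((1 : (V →L[ℂ] V) →L[ℂ] (V →L[ℂ] V)).comp A).prod B)) = (e : (ℂ × 𝔭 × W) →L[ℂ] V) := by
    apply ContinuousLinearMap.ext
    intro p
    have h0 : ((p₀.2.1 : 𝔭) : V →L[ℂ] V) = 0 := by simp [hp₀def]
    have hrhs : ((e : (ℂ × 𝔭 × W) →L[ℂ] V)) p = ℓ p := by
      rw [ContinuousLinearEquiv.coe_coe, he]
    simp only [ContinuousLinearMap.coe_comp', Function.comp_apply,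
      ContinuousLinearMap.prod_apply, ContinuousLinearMap.one_apply,
      IsBoundedBilinearMap.deriv_apply, h0, NormedSpace.exp_zero,
      ContinuousLinearMap.coe_coe, ZeroMemClass.coe_zero, one_smul, add_zero]
    rw [hrhs, hℓ, hAapp, ContinuousLinearMap.add_apply,
      ContinuousLinearMap.smulRight_apply]
    simp only [ContinuousLinearMap.coe_fst', ContinuousLinearMap.coe_comp',
      Function.comp_apply, Submodule.coe_subtypeL', Submodule.coe_subtype,
      ContinuousLinearMap.coe_snd']
    rw [show p₀.1 • v₀ + (p₀.2.2 : V) = v₀ by simp [hp₀def]]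
    abel
  rw [key] at hΦ'
  -- inverse function theorem
  have hg1 : ∀ᶠ v in 𝓝 v₀, Φ (HasStrictFDerivAt.localInverse (𝕜 := ℂ) Φ e p₀ hΦ' v) = v := by
    have := HasStrictFDerivAt.eventually_right_inverse (𝕜 := ℂ) (E := ℂ × 𝔭 × W) (F := V) (f' := e) hΦ'
    rwa [hΦp₀] at this
  have hg0 : HasStrictFDerivAt.localInverse (𝕜 := ℂ) Φ e p₀ hΦ' v₀ = p₀ := by
    have := HasStrictFDerivAt.localInverse_apply_image (𝕜 := ℂ) (E := ℂ × 𝔭 × W) (F := V) (f' := e) hΦ'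
    rwa [hΦp₀] at this
  have hg2 : ContinuousAt (HasStrictFDerivAt.localInverse (𝕜 := ℂ) Φ e p₀ hΦ') v₀ := by
    have := HasStrictFDerivAt.localInverse_continuousAt (𝕜 := ℂ) (E := ℂ × 𝔭 × W) (F := V) (f' := e) hΦ'
    rwa [hΦp₀] at this
  intro ε hε
  have hsmall : ∀ᶠ v in 𝓝 v₀, ‖HasStrictFDerivAt.localInverse (𝕜 := ℂ) Φ e p₀ hΦ' v - p₀‖ < ε := by
    have hcont : ContinuousAt (fun v => ‖HasStrictFDerivAt.localInverse (𝕜 := ℂ) Φ e p₀ hΦ' v - p₀‖) v₀ :=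
      (hg2.sub continuousAt_const).norm
    have h0 : ‖HasStrictFDerivAt.localInverse (𝕜 := ℂ) Φ e p₀ hΦ' v₀ - p₀‖ < ε := by
      rw [hg0, sub_self]; exact lt_of_le_of_lt (le_of_eq norm_zero) hε
    exact hcont.eventually_lt continuousAt_const h0
  obtain ⟨δ, hδpos, hδ⟩ := Metric.eventually_nhds_iff.1 (hg1.and hsmall)
  refine ⟨δ, hδpos, fun v hv => ?_⟩
  obtain ⟨hΦv, hnorm⟩ := hδ (show dist v v₀ < δ by rwa [dist_eq_norm])
  set p := HasStrictFDerivAt.localInverse (𝕜 := ℂ) Φ e p₀ hΦ' v with hpdef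
  refine ⟨-(p.2.1 : V →L[ℂ] V), 𝔭.neg_mem p.2.1.2, ?_, ?_⟩
  · rw [norm_neg]
    calc ‖((p.2.1 : 𝔭) : V →L[ℂ] V)‖ = ‖(p - p₀).2.1‖ := by
          simp [hp₀def, Prod.sub_def]
      _ ≤ ‖(p - p₀).2‖ := norm_fst_le _
      _ ≤ ‖p - p₀‖ := norm_snd_le _
      _ < ε := hnorm
  · have hinvexp : NormedSpace.exp (-(p.2.1 : V →L[ℂ] V)) *
        NormedSpace.exp ((p.2.1 : V →L[ℂ] V)) = 1 := by
      have h := NormedSpace.exp_add_of_commute_of_mem_ball (𝕂 := ℂ) (𝔸 := V →L[ℂ] V)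
        ((Commute.refl ((p.2.1 : 𝔭) : V →L[ℂ] V)).neg_left) ((NormedSpace.expSeries_radius_eq_top ℂ (V →L[ℂ] V)).symm ▸ edist_lt_top _ _) ((NormedSpace.expSeries_radius_eq_top ℂ (V →L[ℂ] V)).symm ▸ edist_lt_top _ _)
      rw [neg_add_cancel, NormedSpace.exp_zero] at h
      exact h.symm
    have hval : NormedSpace.exp (-(p.2.1 : V →L[ℂ] V)) v = p.1 • v₀ + (p.2.2 : V) := by
      conv_lhs => rw [← hΦv]
      have : Φ p = NormedSpace.exp ((p.2.1 : V →L[ℂ] V)) (p.1 • v₀ + (p.2.2 : V)) := rfl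
      rw [this, ← ContinuousLinearMap.mul_apply, hinvexp, ContinuousLinearMap.one_apply]
    rw [hval]
    exact Submodule.add_mem_sup
      (Submodule.smul_mem _ _ (Submodule.mem_span_singleton_self v₀)) p.2.2.2
end

section
/- Let E be a finite-dimensional real normed vector space, X a compact topological space, μ a finite Borel measure on X, and T : E → C(X, ℝ) a linear map into the continuous real-valued functions on X satisfying: for every Z ∈ E with Z ≠ 0, μ({x ∈ X : (T Z)(x) > 0}) > 0. Define f : E → ℝ by f(Z) = ∫_X exp((T Z)(x)) dμ(x). Then f is proper, i.e. for every M > 0 there exists R > 0 such that f(Z) ≥ M whenever ‖Z‖ ≥ R. -/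
set_option maxHeartbeats 1000000


open Filter Topology MeasureTheory

/-- Properness of `Z ↦ ∫ e^{T Z} dμ` on a finite-dimensional real normed space, when every
nonzero `Z` has `T Z > 0` on a set of positive measure (Proposition 7.6 / Lemma 2.1). -/
theorem stmt_7 {E : Type*} [NormedAddCommGroup E] [NormedSpace ℝ E] [FiniteDimensional ℝ E]
    {X : Type*} [TopologicalSpace X] [CompactSpace X] [MeasurableSpace X] [BorelSpace X]
    (μ : Measure X) [IsFiniteMeasure μ]
    (T : E →ₗ[ℝ] C(X, ℝ))
    (hT : ∀ Z : E, Z ≠ 0 → 0 < μ {x : X | 0 < T Z x}) :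
    ∀ M > 0, ∃ R > 0, ∀ Z : E, R ≤ ‖Z‖ →
      M ≤ ∫ x, Real.exp (T Z x) ∂μ := by
  intro M hM
  by_cases hE : ∀ Z : E, Z = 0
  · refine ⟨1, one_pos, fun Z hZ => ?_⟩
    rw [hE Z, norm_zero] at hZ; linarith
  push_neg at hE
  obtain ⟨Z₁, hZ₁⟩ := hE
  -- T is continuous
  set T' : E →L[ℝ] C(X, ℝ) := LinearMap.toContinuousLinearMap T with hT'def
  have hT'eq : ∀ Z : E, T' Z = T Z := fun Z => rfl
  -- integrability
  have hint : ∀ Z : E, Integrable (fun x => Real.exp (T Z x)) μ := by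
    intro Z
    have : IntegrableOn (fun x => Real.exp (T Z x)) Set.univ μ :=
      ContinuousOn.integrableOn_compact' isCompact_univ MeasurableSet.univ
        (Real.continuous_exp.comp (T Z).continuous).continuousOn
    simpa [integrableOn_univ] using this
  -- key pointwise claim on the sphere
  have key : ∀ W : E, ‖W‖ = 1 → ∃ δ > 0, ∃ ε > 0, ∃ c > 0,
      ∀ Z : E, Z ≠ 0 → ‖Z‖⁻¹ • Z ∈ Metric.ball W δ →
        c * Real.exp (ε * ‖Z‖) ≤ ∫ x, Real.exp (T Z x) ∂μ := by
    intro W hW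
    have hW0 : W ≠ 0 := by
      intro h; rw [h, norm_zero] at hW; norm_num at hW
    have hpos := hT W hW0
    -- find a level set of positive measure
    have hsub : {x : X | 0 < T W x} ⊆ ⋃ n : ℕ, {x : X | 1 / (n + 1 : ℝ) ≤ T W x} := by
      intro x hx
      have hx' : (0:ℝ) < T W x := hx
      obtain ⟨n, hn⟩ := exists_nat_one_div_lt hx'
      exact Set.mem_iUnion.mpr ⟨n, le_of_lt hn⟩
    have hexn : ∃ n : ℕ, μ {x : X | 1 / (n + 1 : ℝ) ≤ T W x} ≠ 0 := by
      by_contra h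
      push_neg at h
      have : μ {x : X | 0 < T W x} = 0 :=
        le_antisymm (le_trans (measure_mono hsub) (le_of_eq (measure_iUnion_null h)))
          zero_le
      exact hpos.ne' this
    obtain ⟨n, hn⟩ := hexn
    set ε₀ : ℝ := 1 / (n + 1 : ℝ) with hε₀def
    have hε₀ : 0 < ε₀ := by positivity
    set S : Set X := {x : X | ε₀ ≤ T W x} with hSdef
    have hSmeas : MeasurableSet S :=
      measurableSet_le measurable_const (T W).continuous.measurable
    have hcpos : 0 < (μ S).toReal :=
      ENNReal.toReal_pos hn (measure_ne_top μ S)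
    refine ⟨ε₀ / (2 * (‖T'‖ + 1)), by positivity, ε₀ / 2, by positivity,
      (μ S).toReal, hcpos, ?_⟩
    intro Z hZ0 hZball
    set V : E := ‖Z‖⁻¹ • Z with hVdef
    have hVW : ‖V - W‖ < ε₀ / (2 * (‖T'‖ + 1)) := by
      simpa [dist_eq_norm] using hZball
    -- lower bound for T V on S
    have hTV : ∀ x ∈ S, ε₀ / 2 ≤ T V x := by
      intro x hx
      have h1 : ‖T' (V - W)‖ ≤ ‖T'‖ * ‖V - W‖ := T'.le_opNorm _
      have h2 : ‖T'‖ * ‖V - W‖ ≤ ε₀ / 2 := by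
        have hb : ‖T'‖ * ‖V - W‖ ≤ ‖T'‖ * (ε₀ / (2 * (‖T'‖ + 1))) :=
          mul_le_mul_of_nonneg_left hVW.le (norm_nonneg T')
        have : ‖T'‖ * (ε₀ / (2 * (‖T'‖ + 1))) ≤ ε₀ / 2 := by
          have h0 : (0:ℝ) ≤ ‖T'‖ := norm_nonneg T'
          have hden : (0:ℝ) < 2 * (‖T'‖ + 1) := by positivity
          rw [mul_comm, div_mul_eq_mul_div, div_le_div_iff₀ hden two_pos]
          nlinarith
        linarith
      have h3 : |T V x - T W x| ≤ ‖T' (V - W)‖ := by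
        have := (T' (V - W)).norm_coe_le_norm x
        rw [hT'eq, map_sub] at this
        simpa [Real.norm_eq_abs, hT'eq] using this
      have h4 : ε₀ ≤ T W x := hx
      have := abs_le.mp (le_trans h3 (le_trans h1 h2))
      linarith [this.1]
    -- expand Z = ‖Z‖ • V
    have hZV : Z = ‖Z‖ • V := by
      rw [hVdef, smul_smul, mul_inv_cancel₀ (norm_ne_zero_iff.mpr hZ0), one_smul]
    have hTZ : ∀ x ∈ S, ε₀ / 2 * ‖Z‖ ≤ T Z x := by
      intro x hx
      have heq : T Z = ‖Z‖ • T V := by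
        conv_lhs => rw [hZV]
        exact T.map_smul _ _
      have heq' : T Z x = ‖Z‖ * T V x := by
        rw [heq, ContinuousMap.smul_apply, smul_eq_mul]
      rw [heq']
      nlinarith [mul_le_mul_of_nonneg_left (hTV x hx) (norm_nonneg Z)]
    have hconst : ∀ x ∈ S, Real.exp (ε₀ / 2 * ‖Z‖) ≤ Real.exp (T Z x) :=
      fun x hx => Real.exp_le_exp.mpr (hTZ x hx)
    have hstep1 : Real.exp (ε₀ / 2 * ‖Z‖) * (μ S).toReal
        ≤ ∫ x in S, Real.exp (T Z x) ∂μ :=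
      by have := setIntegral_ge_of_const_le_real hSmeas (measure_ne_top μ S) hconst
          ((hint Z).integrableOn)
         rw [measureReal_def] at this
         exact this
    have hstep2 : ∫ x in S, Real.exp (T Z x) ∂μ ≤ ∫ x, Real.exp (T Z x) ∂μ :=
      setIntegral_le_integral (hint Z)
        (Filter.Eventually.of_forall fun x => (Real.exp_pos _).le)
    calc (μ S).toReal * Real.exp (ε₀ / 2 * ‖Z‖)
        = Real.exp (ε₀ / 2 * ‖Z‖) * (μ S).toReal := mul_comm _ _
      _ ≤ ∫ x in S, Real.exp (T Z x) ∂μ := hstep1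
      _ ≤ ∫ x, Real.exp (T Z x) ∂μ := hstep2
  -- choose data for each point of the sphere
  have sphW : ∀ W : Metric.sphere (0:E) 1, ‖(W:E)‖ = 1 := fun W =>
    mem_sphere_zero_iff_norm.mp W.2
  choose δ hδ ε hε c hc H using fun W : Metric.sphere (0:E) 1 => key W (sphW W)
  -- compactness of the sphere
  have hcover : Metric.sphere (0:E) 1 ⊆
      ⋃ W : Metric.sphere (0:E) 1, Metric.ball (W:E) (δ W) := by
    intro w hw
    exact Set.mem_iUnion.mpr ⟨⟨w, hw⟩, Metric.mem_ball_self (hδ _)⟩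
  obtain ⟨t, ht⟩ := (isCompact_sphere (0:E) 1).elim_finite_subcover
    (fun W : Metric.sphere (0:E) 1 => Metric.ball (W:E) (δ W))
    (fun W => Metric.isOpen_ball) hcover
  -- the sphere is nonempty, hence t is nonempty
  have hV₁ : ‖(‖Z₁‖⁻¹ : ℝ) • Z₁‖ = 1 := norm_smul_inv_norm hZ₁
  have htne : t.Nonempty := by
    by_contra h
    rw [Finset.not_nonempty_iff_eq_empty] at h
    have := ht (mem_sphere_zero_iff_norm.mpr hV₁)
    simp [h] at this
  -- choose R
  set R : ℝ := max 1 (t.sup' htne fun i => Real.log (M / c i) / ε i) with hRdef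
  refine ⟨R, lt_of_lt_of_le one_pos (le_max_left _ _), ?_⟩
  intro Z hZR
  have hR1 : (1:ℝ) ≤ R := le_max_left _ _
  have hZnorm : (1:ℝ) ≤ ‖Z‖ := le_trans hR1 hZR
  have hZ0 : Z ≠ 0 := by
    intro h; rw [h, norm_zero] at hZnorm; linarith
  have hVmem : ‖Z‖⁻¹ • Z ∈ Metric.sphere (0:E) 1 :=
    mem_sphere_zero_iff_norm.mpr (norm_smul_inv_norm hZ0)
  obtain ⟨i, hit, hiball⟩ := Set.mem_iUnion₂.mp (ht hVmem)
  have hineq := H i Z hZ0 hiball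
  -- M ≤ c i * exp (ε i * ‖Z‖)
  have hRi : Real.log (M / c i) / ε i ≤ ‖Z‖ :=
    le_trans (le_trans (Finset.le_sup' (fun i => Real.log (M / c i) / ε i) hit) (le_max_right _ _)) hZR
  have hlog : Real.log (M / c i) ≤ ε i * ‖Z‖ := by
    rw [div_le_iff₀ (hε i)] at hRi
    linarith [hRi]
  have hMc : M / c i ≤ Real.exp (ε i * ‖Z‖) := by
    calc M / c i = Real.exp (Real.log (M / c i)) :=
          (Real.exp_log (div_pos hM (hc i))).symm
      _ ≤ Real.exp (ε i * ‖Z‖) := Real.exp_le_exp.mpr hlog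
  have : M ≤ c i * Real.exp (ε i * ‖Z‖) := by
    rw [div_le_iff₀ (hc i)] at hMc
    linarith [hMc]
  linarith [hineq]
end

section
/- Let E be a finite-dimensional real normed vector space, X a compact topological space, μ a finite Borel measure on X, and T : E → C(X, ℝ) a linear map into the continuous real-valued functions on X satisfying: for every Z ∈ E with Z ≠ 0, μ({x ∈ X : (T Z)(x) > 0}) > 0. Define f : E → ℝ by f(Z) = ∫_X exp((T Z)(x)) dμ(x). Then f is continuous and strictly convex, and there exists a unique point Z₀ ∈ E at which f attains its infimum over E. -/
open Filter Topology MeasureTheory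

section helpers

variable {X : Type*} [TopologicalSpace X] [CompactSpace X] [MeasurableSpace X] [BorelSpace X]
  (μ : Measure X) [IsFiniteMeasure μ]

lemma cm_integrable_aux (g : C(X, ℝ)) : Integrable g μ :=
  (BoundedContinuousFunction.mkOfCompact g).integrable μ

lemma continuous_cm_integral_aux : Continuous fun g : C(X, ℝ) => ∫ x, g x ∂μ := by
  refine (LipschitzWith.of_dist_le_mul (K := (μ Set.univ).toNNReal) fun g h => ?_).continuous
  have h1 : (∫ x, g x ∂μ) - ∫ x, h x ∂μ = ∫ x, (g x - h x) ∂μ :=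
    (integral_sub (cm_integrable_aux μ g) (cm_integrable_aux μ h)).symm
  have h2 := (BoundedContinuousFunction.mkOfCompact (g - h)).norm_integral_le_mul_norm μ
  have h3 : ∀ x, (BoundedContinuousFunction.mkOfCompact (g - h)) x = g x - h x := fun x => rfl
  simp only [h3] at h2
  rw [dist_eq_norm (∫ x, g x ∂μ) (∫ x, h x ∂μ), h1, dist_eq_norm g h,
    ENNReal.coe_toNNReal_eq_toReal]
  exact h2.trans_eq (by rw [BoundedContinuousFunction.norm_mkOfCompact]; rfl)

end helpers

/-- The functional `f Z = ∫ e^{T Z} dμ` is continuous and strictly convex, and attains its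
infimum at a unique point (core of Proposition 7.6: uniqueness of the soliton vector field). -/
theorem stmt_8 {E : Type*} [NormedAddCommGroup E] [NormedSpace ℝ E] [FiniteDimensional ℝ E]
    {X : Type*} [TopologicalSpace X] [CompactSpace X] [MeasurableSpace X] [BorelSpace X]
    (μ : Measure X) [IsFiniteMeasure μ]
    (T : E →ₗ[ℝ] C(X, ℝ))
    (hT : ∀ Z : E, Z ≠ 0 → 0 < μ {x : X | 0 < T Z x})
    (f : E → ℝ) (hf : f = fun Z => ∫ x, Real.exp (T Z x) ∂μ) :
    Continuous f ∧ StrictConvexOn ℝ Set.univ f ∧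
      ∃! Z₀ : E, ∀ Z : E, f Z₀ ≤ f Z := by
  subst hf
  set expC : C(ℝ, ℝ) := ⟨Real.exp, Real.continuous_exp⟩ with hexpC
  set posC : C(ℝ, ℝ) := ⟨fun u => max u 0, continuous_id.max continuous_const⟩ with hposC
  have hTc : Continuous T := T.continuous_of_finiteDimensional
  -- integrability
  have hint : ∀ Z : E, Integrable (fun x => Real.exp (T Z x)) μ := fun Z =>
    cm_integrable_aux μ (expC.comp (T Z))
  have hpint : ∀ Z : E, Integrable (fun x => max (T Z x) 0) μ := fun Z =>
    cm_integrable_aux μ (posC.comp (T Z))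
  -- continuity
  have hcont : Continuous fun Z : E => ∫ x, Real.exp (T Z x) ∂μ := by
    have : (fun Z : E => ∫ x, Real.exp (T Z x) ∂μ)
        = (fun g : C(X, ℝ) => ∫ x, g x ∂μ) ∘ fun Z : E => expC.comp (T Z) := rfl
    rw [this]
    exact (continuous_cm_integral_aux μ).comp ((ContinuousMap.continuous_postcomp expC).comp hTc)
  -- strict convexity
  have hconv : StrictConvexOn ℝ Set.univ fun Z : E => ∫ x, Real.exp (T Z x) ∂μ := by
    refine ⟨convex_univ, fun a _ b _ hab s t hs ht hst => ?_⟩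
    have hTx : ∀ x, T (s • a + t • b) x = s * T a x + t * T b x := by
      intro x
      simp [T.map_add, T.map_smul]
    have hle : ∀ x, Real.exp (T (s • a + t • b) x)
        ≤ s * Real.exp (T a x) + t * Real.exp (T b x) := by
      intro x
      rw [hTx x]
      simpa [smul_eq_mul] using
        convexOn_exp.2 (Set.mem_univ (T a x)) (Set.mem_univ (T b x)) hs.le ht.le hst
    have hψint : Integrable (fun x => s * Real.exp (T a x) + t * Real.exp (T b x)) μ :=
      ((hint a).const_mul s).add ((hint b).const_mul t)
    have hpos : 0 < ∫ x, (s * Real.exp (T a x) + t * Real.exp (T b x)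
        - Real.exp (T (s • a + t • b) x)) ∂μ := by
      rw [integral_pos_iff_support_of_nonneg (fun x => sub_nonneg.2 (hle x))
        (hψint.sub (hint _))]
      refine lt_of_lt_of_le (hT (a - b) (sub_ne_zero.2 hab)) (measure_mono ?_)
      intro x hx
      have hne : T a x ≠ T b x := by
        have : T (a - b) x = T a x - T b x := by simp [map_sub]
        intro h
        rw [Set.mem_setOf_eq, this, h, sub_self] at hx
        exact lt_irrefl 0 hx
      have hstrict := strictConvexOn_exp.2 (Set.mem_univ (T a x)) (Set.mem_univ (T b x))
        hne hs ht hst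
      simp only [smul_eq_mul] at hstrict
      rw [Function.mem_support]
      rw [hTx x]
      exact sub_ne_zero.2 (ne_of_gt hstrict)
    have hsplit : ∫ x, (s * Real.exp (T a x) + t * Real.exp (T b x)) ∂μ
        = s * (∫ x, Real.exp (T a x) ∂μ) + t * ∫ x, Real.exp (T b x) ∂μ := by
      rw [integral_add ((hint a).const_mul s) ((hint b).const_mul t),
        integral_const_mul, integral_const_mul]
    rw [integral_sub hψint (hint _), hsplit] at hpos
    simp only [smul_eq_mul]
    linarith
  refine ⟨hcont, hconv, ?_⟩
  -- coercivity bound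
  have hexp_ge : ∀ u : ℝ, max u 0 ≤ Real.exp u := fun u =>
    max_le (by linarith [Real.add_one_le_exp u]) (Real.exp_pos u).le
  have hψ_le : ∀ Z : E, (∫ x, max (T Z x) 0 ∂μ) ≤ ∫ x, Real.exp (T Z x) ∂μ := fun Z =>
    integral_mono (hpint Z) (hint Z) fun x => hexp_ge (T Z x)
  have hψpos : ∀ Z : E, Z ≠ 0 → 0 < ∫ x, max (T Z x) 0 ∂μ := by
    intro Z hZ
    refine (integral_pos_iff_support_of_nonneg (fun x => le_max_right _ _) (hpint Z)).2 ?_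
    refine lt_of_lt_of_le (hT Z hZ) (measure_mono ?_)
    intro x hx
    rw [Set.mem_setOf_eq] at hx
    rw [Function.mem_support]
    show max (T Z x) 0 ≠ 0
    exact (lt_max_of_lt_left hx).ne'
  have hψhomog : ∀ (r : ℝ) (Z : E), 0 ≤ r →
      (∫ x, max (T (r • Z) x) 0 ∂μ) = r * ∫ x, max (T Z x) 0 ∂μ := by
    intro r Z hr
    rw [← integral_const_mul]
    congr 1
    funext x
    have : T (r • Z) x = r * T Z x := by simp [T.map_smul]
    rw [this, mul_max_of_nonneg _ _ hr, mul_zero]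
  have hf0 : ∀ Z : E, (0:ℝ) ≤ ∫ x, Real.exp (T Z x) ∂μ := fun Z =>
    integral_nonneg fun x => (Real.exp_pos _).le
  -- get uniform constant on the sphere or handle trivial case
  have hbound : ∃ c : ℝ, 0 < c ∧ ∀ Z : E, c * ‖Z‖ ≤ ∫ x, Real.exp (T Z x) ∂μ := by
    by_cases hE : ∀ Z : E, Z = 0
    · refine ⟨1, one_pos, fun Z => ?_⟩
      rw [hE Z]
      simp only [norm_zero, mul_zero]
      exact hf0 0
    · push_neg at hE
      obtain ⟨V, hV⟩ := hE
      have hsne : (Metric.sphere (0:E) 1).Nonempty := by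
        refine ⟨‖V‖⁻¹ • V, ?_⟩
        have hVn : ‖V‖ ≠ 0 := norm_ne_zero_iff.2 hV
        simp [norm_smul, abs_of_nonneg (inv_nonneg.2 (norm_nonneg V)),
          inv_mul_cancel₀ hVn]
      have hψcont : Continuous fun Z : E => ∫ x, max (T Z x) 0 ∂μ := by
        have : (fun Z : E => ∫ x, max (T Z x) 0 ∂μ)
            = (fun g : C(X, ℝ) => ∫ x, g x ∂μ) ∘ fun Z : E => posC.comp (T Z) := rfl
        rw [this]
        exact (continuous_cm_integral_aux μ).comp
          ((ContinuousMap.continuous_postcomp posC).comp hTc)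
      obtain ⟨W, hW, hWmin'⟩ := (isCompact_sphere (0:E) 1).exists_isMinOn hsne
        hψcont.continuousOn
      have hWmin : ∀ y ∈ Metric.sphere (0:E) 1, (∫ x, max (T W x) 0 ∂μ) ≤ ∫ x, max (T y x) 0 ∂μ :=
        fun y hy => hWmin' hy
      have hWne : W ≠ 0 := by
        intro h
        rw [mem_sphere_iff_norm, h, sub_zero, norm_zero] at hW
        exact one_ne_zero hW.symm
      refine ⟨∫ x, max (T W x) 0 ∂μ, hψpos W hWne, fun Z => ?_⟩
      by_cases hZ : Z = 0
      · rw [hZ]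
        simpa using hf0 0
      · have hZn : ‖Z‖ ≠ 0 := norm_ne_zero_iff.2 hZ
        have hmem : (‖Z‖⁻¹ • Z) ∈ Metric.sphere (0:E) 1 := by
          simp [norm_smul, abs_of_nonneg (inv_nonneg.2 (norm_nonneg Z)),
            inv_mul_cancel₀ hZn]
        have h1 := hWmin _ hmem
        have h2 : (∫ x, max (T Z x) 0 ∂μ) = ‖Z‖ * ∫ x, max (T (‖Z‖⁻¹ • Z) x) 0 ∂μ := by
          rw [← hψhomog ‖Z‖ (‖Z‖⁻¹ • Z) (norm_nonneg Z), smul_smul,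
            mul_inv_cancel₀ hZn, one_smul]
        calc (∫ x, max (T W x) 0 ∂μ) * ‖Z‖
            ≤ (∫ x, max (T (‖Z‖⁻¹ • Z) x) 0 ∂μ) * ‖Z‖ := by
              apply mul_le_mul_of_nonneg_right h1 (norm_nonneg Z)
          _ = ∫ x, max (T Z x) 0 ∂μ := by rw [h2, mul_comm]
          _ ≤ ∫ x, Real.exp (T Z x) ∂μ := hψ_le Z
  obtain ⟨c, hc, hcb⟩ := hbound
  have hlim : Tendsto (fun Z : E => ∫ x, Real.exp (T Z x) ∂μ) (cocompact E) atTop := by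
    refine tendsto_atTop_mono hcb ?_
    exact tendsto_norm_cocompact_atTop.const_mul_atTop hc
  obtain ⟨Z₀, hZ₀⟩ := hcont.exists_forall_le hlim
  refine ⟨Z₀, hZ₀, fun Y hY => ?_⟩
  exact hconv.eq_of_isMinOn (isMinOn_univ_iff.2 fun y => hY y)
    (isMinOn_univ_iff.2 fun y => hZ₀ y) (Set.mem_univ _) (Set.mem_univ _)
end
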